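/- arXiv:1607.07557 — 7 statements merged into one kernel-verified Lean document; each statement's English description precedes it below -/
import Mathlib

section
/- Let t0 ∈ ℤ, a, b > 0, d ≥ 0, and τ̄ ∈ ℕ. Let τ : ℤ → ℕ satisfy τ(t) ≤ τ̄ for all t, and let x : ℤ → ℝ satisfy x(t) > 0 for all t and x(t+1) − x(t) ≥ x(t)·(b − a·x(t − τ(t))) + d for all t ≥ t0. Suppose there is N > 0 with limsup_{t→∞} x(t) ≤ N and 1 − a·N > 0. Then liminf_{t→∞} x(t) ≥ (b/a)·(1 − a·N)^{τ̄}. -/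
open Filter

set_option maxHeartbeats 1600000
set_option maxHeartbeats 1600000

lemma discrete_aux
    (t0 : ℤ) (a b d : ℝ) (τbar : ℕ)
    (ha : 0 < a) (hb : 0 < b) (hd : 0 ≤ d)
    (τ : ℤ → ℕ) (hτ : ∀ t, τ t ≤ τbar)
    (x : ℤ → ℝ) (hxpos : ∀ t, 0 < x t)
    (hineq : ∀ t, t0 ≤ t →
      x t * (b - a * x (t - (τ t : ℤ))) + d ≤ x (t + 1) - x t)
    (N' : ℝ) (hL : 0 < 1 - a * N') (hN' : 0 < N')
    (T0 : ℤ) (hbound : ∀ t, T0 ≤ t → x t ≤ N')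
    (r : ℝ) (hr : r < b / a * (1 - a * N') ^ τbar) :
    ∀ᶠ t in (atTop : Filter ℤ), r < x t := by
  set L : ℝ := 1 - a * N' with hLdef
  have hL1 : L < 1 := by
    have := mul_pos ha hN'; simp only [hLdef]; linarith
  set c : ℝ := b / a * L ^ τbar with hcdef
  have hLpow_pos : 0 < L ^ τbar := pow_pos hL _
  have hLpow_le1 : L ^ τbar ≤ 1 := pow_le_one₀ hL.le hL1.le
  have hba : 0 < b / a := div_pos hb ha
  have hcpos : 0 < c := mul_pos hba hLpow_pos
  have hcba : c ≤ b / a := by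
    calc c = b / a * L ^ τbar := rfl
    _ ≤ b / a * 1 := by nlinarith
    _ = b / a := mul_one _
  set T : ℤ := max t0 (T0 + τbar) with hTdef
  -- basic per-step estimates
  have hbound' : ∀ s : ℤ, T ≤ s → x (s - (τ s : ℤ)) ≤ N' := by
    intro s hs
    apply hbound
    have h1 : (T0 : ℤ) + τbar ≤ s := le_trans (le_max_right _ _) hs
    have h2 : (τ s : ℤ) ≤ (τbar : ℤ) := by exact_mod_cast hτ s
    omega
  have hstep : ∀ s : ℤ, T ≤ s →
      x s * (1 + (b - a * x (s - (τ s : ℤ)))) ≤ x (s + 1) := by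
    intro s hs
    have := hineq s (le_trans (le_max_left _ _) hs)
    nlinarith [hxpos s]
  have hstepL : ∀ s : ℤ, T ≤ s → L * x s ≤ x (s + 1) := by
    intro s hs
    have h1 := hstep s hs
    have h2 := hbound' s hs
    have h3 := hxpos s
    nlinarith [mul_nonneg (mul_nonneg h3.le ha.le) (sub_nonneg.mpr h2), mul_pos h3 hb]
  have hchain : ∀ n : ℕ, ∀ s : ℤ, T ≤ s → L ^ n * x s ≤ x (s + n) := by
    intro n
    induction n with
    | zero => intro s _; simp
    | succ n ih =>
      intro s hs
      have h1 := ih s hs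
      have h2 := hstepL (s + n) (by omega)
      have h3 : (s + (n + 1 : ℕ) : ℤ) = (s + n) + 1 := by push_cast; ring
      rw [h3]
      calc L ^ (n+1) * x s = L * (L ^ n * x s) := by ring
      _ ≤ L * x (s + n) := by nlinarith
      _ ≤ x (s + n + 1) := h2
  set T1 : ℤ := T + τbar with hT1def
  -- key step: x (t+1) ≥ min (x t) c for t ≥ T1
  have hkey : ∀ t : ℤ, T1 ≤ t → min (x t) c ≤ x (t + 1) := by
    intro t ht
    by_cases hdec : x t ≤ x (t + 1)
    · exact le_trans (min_le_left _ _) hdec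
    · push_neg at hdec
      refine le_trans (min_le_right _ _) ?_
      have hT : T ≤ t := by omega
      set u : ℝ := x (t - (τ t : ℤ)) with hudef
      have hu_pos : 0 < u := hxpos _
      have hstep' := hstep t hT
      have huN : u ≤ N' := hbound' t hT
      have hub : b < a * u := by nlinarith [hxpos t]
      have hTsub : T ≤ t - (τ t : ℤ) := by
        have h2 : (τ t : ℤ) ≤ (τbar : ℤ) := by exact_mod_cast hτ t
        omega
      have hch := hchain (τ t) (t - (τ t : ℤ)) hTsub
      rw [show (t - (τ t : ℤ)) + (τ t : ℤ) = t by ring] at hch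
      have hfac : 0 < 1 + (b - a * u) := by nlinarith
      have h1 : L ^ (τ t) * u * (1 + (b - a * u)) ≤ x (t + 1) := by
        calc L ^ (τ t) * u * (1 + (b - a * u))
            ≤ x t * (1 + (b - a * u)) := by nlinarith
        _ ≤ x (t + 1) := hstep'
      have h1au : a * u ≤ a * N' := mul_le_mul_of_nonneg_left huN ha.le
      have h2 : b / a ≤ u * (1 + (b - a * u)) := by
        rw [div_le_iff₀ ha]
        nlinarith [mul_nonneg (sub_pos.mpr hub).le (by linarith : (0:ℝ) ≤ 1 - a * u)]
      have h3 : L ^ τbar ≤ L ^ (τ t) := pow_le_pow_of_le_one hL.le hL1.le (hτ t)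
      have hp : 0 < L ^ (τ t) := pow_pos hL _
      calc c = b / a * L ^ τbar := rfl
      _ ≤ (u * (1 + (b - a * u))) * L ^ (τ t) := by nlinarith
      _ = L ^ (τ t) * u * (1 + (b - a * u)) := by ring
      _ ≤ x (t + 1) := h1
  by_cases hA : ∃ t : ℤ, T1 ≤ t ∧ c ≤ x t
  · obtain ⟨t, ht, hct⟩ := hA
    have hpers : ∀ s : ℤ, t ≤ s → c ≤ x s := by
      refine Int.le_induction hct ?_
      intro s hs ih
      have hk := hkey s (by omega)
      rcases min_cases (x s) c with ⟨h1, h2⟩ | ⟨h1, h2⟩ <;> linarith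
    exact eventually_atTop.mpr ⟨t, fun s hs => lt_of_lt_of_le hr (le_trans le_rfl ((hpers s hs)))⟩
  · push_neg at hA
    -- x is nondecreasing from T1 on
    have hmono : ∀ t : ℤ, T1 ≤ t → x t ≤ x (t + 1) := by
      intro t ht
      by_contra hcon
      push_neg at hcon
      have hk := hkey t ht
      have hB := hA (t + 1) (by omega)
      rcases min_cases (x t) c with ⟨h1, h2⟩ | ⟨h1, h2⟩ <;> linarith
    have hmono' : ∀ s : ℤ, T1 ≤ s → ∀ t : ℤ, s ≤ t → x s ≤ x t := by
      intro s hT1s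
      refine Int.le_induction le_rfl ?_
      intro u hsu ih
      exact le_trans ih (hmono u (by omega))
    by_cases hB1 : ∃ t : ℤ, T1 ≤ t ∧ r < x t
    · obtain ⟨t, ht, hrt⟩ := hB1
      exact eventually_atTop.mpr ⟨t, fun s hs => lt_of_lt_of_le hrt (hmono' t ht s hs)⟩
    · exfalso
      push_neg at hB1
      -- all values ≤ r from T1 on; derive unbounded growth
      have hr0 : 0 < r := lt_of_lt_of_le (hxpos T1) (hB1 T1 le_rfl)
      have hrb : a * r < b := by
        have := lt_of_lt_of_le hr hcba
        have h4 : r < b / a := lt_of_lt_of_le hr hcba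
        calc a * r < a * (b / a) := by exact mul_lt_mul_of_pos_left h4 ha
        _ = b := by field_simp
      set δ : ℝ := x T1 * (b - a * r) with hδdef
      have hδpos : 0 < δ := mul_pos (hxpos T1) (by linarith)
      set T2 : ℤ := T1 + τbar with hT2def
      have hgrow : ∀ n : ℕ, x T2 + n * δ ≤ x (T2 + n) := by
        intro n
        induction n with
        | zero => simp
        | succ n ih =>
          have htn : T1 ≤ T2 + n := by omega
          have hTt : T ≤ T2 + n := by omega
          have hsub : T1 ≤ T2 + n - (τ (T2 + n) : ℤ) := by
            have h2 : (τ (T2 + n) : ℤ) ≤ (τbar : ℤ) := by exact_mod_cast hτ _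
            omega
          have hxr : x (T2 + n - (τ (T2 + n) : ℤ)) ≤ r := hB1 _ hsub
          have hs := hstep (T2 + n) hTt
          have hlow : x T1 ≤ x (T2 + n) := hmono' T1 le_rfl (T2 + n) htn
          have hup : x (T2 + n) ≤ r := hB1 _ htn
          have hxp := hxpos (T2 + n)
          have h3 : (T2 + (n + 1 : ℕ) : ℤ) = (T2 + n) + 1 := by push_cast; ring
          rw [h3]
          have hδstep : x (T2 + n) + δ ≤ x (T2 + n + 1) := by
            have e1 : b - a * r ≤ b - a * x (T2 + n - (τ (T2 + n) : ℤ)) := by nlinarith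
            have e2 : 0 < b - a * r := by linarith
            calc x (T2 + n) + δ = x (T2 + n) + x T1 * (b - a * r) := rfl
            _ ≤ x (T2 + n) + x (T2 + n) * (b - a * x (T2 + n - (τ (T2 + n) : ℤ))) := by nlinarith
            _ = x (T2 + n) * (1 + (b - a * x (T2 + n - (τ (T2 + n) : ℤ)))) := by ring
            _ ≤ x (T2 + n + 1) := hs
          push_cast
          push_cast at ih
          linarith
      obtain ⟨n, hn⟩ := exists_nat_gt (r / δ)
      have hnδ : r < n * δ := by
        rw [div_lt_iff₀ hδpos] at hn; linarith
      have h1 := hgrow n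
      have h2 : x (T2 + n) ≤ r := hB1 _ (by omega)
      have h3 := hxpos T2
      linarith


/-- Discrete comparison lemma (Lemma 3.1(ii) of the paper on `𝕋 = ℤ`, no impulses):
lower bound for the delayed logistic-type difference inequality. -/
theorem discrete_delay_comparison_lower
    (t0 : ℤ) (a b d : ℝ) (τbar : ℕ)
    (ha : 0 < a) (hb : 0 < b) (hd : 0 ≤ d)
    (τ : ℤ → ℕ) (hτ : ∀ t, τ t ≤ τbar)
    (x : ℤ → ℝ) (hxpos : ∀ t, 0 < x t)
    (hineq : ∀ t, t0 ≤ t →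
      x t * (b - a * x (t - (τ t : ℤ))) + d ≤ x (t + 1) - x t)
    (N : ℝ) (hN : 0 < N)
    (hlimsup : Filter.limsup (fun t : ℤ => (x t : EReal)) atTop ≤ (N : EReal))
    (haN : 0 < 1 - a * N) :
    ((b / a * (1 - a * N) ^ τbar : ℝ) : EReal) ≤
      Filter.liminf (fun t : ℤ => (x t : EReal)) atTop := by
  rw [le_liminf_iff]
  intro y hy
  induction y using EReal.rec with
  | bot => filter_upwards with t; exact EReal.bot_lt_coe _
  | top => exact absurd hy (not_lt.mpr le_top)
  | coe r =>
    have hr : r < b / a * (1 - a * N) ^ τbar := EReal.coe_lt_coe_iff.mp hy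
    -- choose N' slightly above N
    have hcont : Continuous fun y : ℝ => b / a * (1 - a * y) ^ τbar := by continuity
    have hopen : IsOpen ({y : ℝ | r < b / a * (1 - a * y) ^ τbar} ∩ {y : ℝ | 0 < 1 - a * y}) :=
      (isOpen_lt continuous_const hcont).inter
        (isOpen_lt continuous_const (by continuity : Continuous fun y : ℝ => 1 - a * y))
    rw [Metric.isOpen_iff] at hopen
    obtain ⟨ε, hε, hball⟩ := hopen N ⟨hr, haN⟩
    set N' : ℝ := N + ε / 2 with hN'def
    have hN'mem : N' ∈ ({y : ℝ | r < b / a * (1 - a * y) ^ τbar} ∩ {y : ℝ | 0 < 1 - a * y}) := by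
      apply hball
      rw [Metric.mem_ball, Real.dist_eq]
      rw [show N' - N = ε / 2 by rw [hN'def]; ring, abs_of_pos (by linarith)]
      linarith
    obtain ⟨hrN', hLN'⟩ := hN'mem
    have hN'pos : 0 < N' := by simp only [hN'def]; linarith
    -- eventually x t ≤ N'
    have hls : Filter.limsup (fun t : ℤ => (x t : EReal)) atTop < (N' : EReal) :=
      lt_of_le_of_lt hlimsup (EReal.coe_lt_coe_iff.mpr (by simp only [hN'def]; linarith))
    have hev : ∀ᶠ t in (atTop : Filter ℤ), (x t : EReal) < (N' : EReal) :=
      eventually_lt_of_limsup_lt hls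
    obtain ⟨T0, hT0⟩ := eventually_atTop.mp hev
    have hbound : ∀ t : ℤ, T0 ≤ t → x t ≤ N' :=
      fun t ht => (EReal.coe_lt_coe_iff.mp (hT0 t ht)).le
    have := discrete_aux t0 a b d τbar ha hb hd τ hτ x hxpos hineq N' hLN' hN'pos
      T0 hbound r hrN'
    filter_upwards [this] with t hti
    exact EReal.coe_lt_coe_iff.mpr hti
end

section
/- Let t0 ∈ ℝ, A, B > 0, τ̄ ≥ 0, and let τ : ℝ → ℝ be continuous with 0 ≤ τ(t) ≤ τ̄ for all t. Let u : ℝ → ℝ be differentiable on [t0, ∞) and satisfy u'(t) ≤ B − A·exp(u(t − τ(t))) for all t ≥ t0. Then limsup_{t→∞} u(t) ≤ ln(B/A) + B·τ̄. -/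
open Filter

/-- Upper estimate in logarithmic coordinates for the delayed logistic inequality
(`𝕋 = ℝ`, no impulses, inequality (3.1) of the paper). -/
theorem log_delay_upper_estimate
    (t0 A B τbar : ℝ) (hA : 0 < A) (hB : 0 < B) (hτbar : 0 ≤ τbar)
    (τ : ℝ → ℝ) (hτcont : Continuous τ) (hτ : ∀ t, 0 ≤ τ t ∧ τ t ≤ τbar)
    (u : ℝ → ℝ) (hdiff : ∀ t, t0 ≤ t → DifferentiableAt ℝ u t)
    (hineq : ∀ t, t0 ≤ t → deriv u t ≤ B - A * Real.exp (u (t - τ t))) :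
    Filter.limsup (fun t => (u t : EReal)) atTop ≤
      ((Real.log (B / A) + B * τbar : ℝ) : EReal) := by
  set M : ℝ := Real.log (B / A) + B * τbar with hMdef
  -- u has derivative ≤ B on [t0, ∞)
  have hderivB : ∀ t, t0 ≤ t → deriv u t ≤ B := by
    intro t ht
    have h1 := hineq t ht
    have h2 : 0 < A * Real.exp (u (t - τ t)) :=
      mul_pos hA (Real.exp_pos _)
    linarith
  -- the function B*t - u t is monotone on [t0, ∞)
  have hgmono : MonotoneOn (fun t => B * t - u t) (Set.Ici t0) := by
    apply monotoneOn_of_deriv_nonneg (convex_Ici t0)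
    · intro t ht
      exact (((hasDerivAt_id t).const_mul B).sub
        (hdiff t ht).hasDerivAt).continuousAt.continuousWithinAt
    · intro t ht
      rw [interior_Ici] at ht
      exact (((hasDerivAt_id t).const_mul B).sub
        (hdiff t (le_of_lt ht)).hasDerivAt).differentiableAt.differentiableWithinAt
    · intro t ht
      rw [interior_Ici] at ht
      have hd : HasDerivAt (fun t => B * t - u t) (B * 1 - deriv u t) t :=
        ((hasDerivAt_id t).const_mul B).sub (hdiff t (le_of_lt ht)).hasDerivAt
      rw [hd.deriv]
      have := hderivB t (le_of_lt ht)
      linarith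
  -- F2: mean value estimate
  have hF2 : ∀ t, t0 + τbar ≤ t → u t - B * τbar ≤ u (t - τ t) := by
    intro t ht
    have hτt := hτ t
    have h1 : t0 ≤ t - τ t := by linarith [hτt.1, hτt.2]
    have h2 : t0 ≤ t := by linarith [hτt.1]
    have := hgmono h1 (Set.mem_Ici.mpr h2) (by linarith [hτt.1] : t - τ t ≤ t)
    simp only at this
    nlinarith [hτt.1, hτt.2, hB.le]
  -- F3: whenever u t ≥ M + ε (ε ≥ 0), the derivative is ≤ B * (1 - exp ε)
  have hF3 : ∀ ε : ℝ, 0 ≤ ε → ∀ t, t0 + τbar ≤ t → M + ε ≤ u t →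
      deriv u t ≤ B * (1 - Real.exp ε) := by
    intro ε hε t ht hu
    have hτt := hτ t
    have h2 : t0 ≤ t := by linarith [hτt.1]
    have hlow : Real.log (B / A) + ε ≤ u (t - τ t) := by
      have := hF2 t ht
      simp only [hMdef] at hu
      linarith
    have hexp : B * Real.exp ε ≤ A * Real.exp (u (t - τ t)) := by
      have h3 : Real.exp (Real.log (B / A) + ε) ≤ Real.exp (u (t - τ t)) :=
        Real.exp_le_exp.mpr hlow
      rw [Real.exp_add, Real.exp_log (div_pos hB hA)] at h3
      calc B * Real.exp ε = A * (B / A * Real.exp ε) := by field_simp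
        _ ≤ A * Real.exp (u (t - τ t)) := by
            apply mul_le_mul_of_nonneg_left h3 hA.le
    have := hineq t h2
    nlinarith
  -- Case 1 lemma: once u drops below M + ε (ε ≥ 0), it stays there
  have hstay : ∀ ε : ℝ, 0 ≤ ε → ∀ t1, t0 + τbar ≤ t1 → u t1 ≤ M + ε →
      ∀ t, t1 ≤ t → u t ≤ M + ε := by
    intro ε hε t1 ht1 hu1 t2 ht2
    by_contra hcon
    push_neg at hcon
    have ht1t0 : t0 ≤ t1 := by linarith
    have hucont : ContinuousOn u (Set.Icc t1 t2) := by
      intro x hx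
      exact (hdiff x (le_trans ht1t0 hx.1)).continuousAt.continuousWithinAt
    set S : Set ℝ := Set.Icc t1 t2 ∩ u ⁻¹' (Set.Iic (M + ε)) with hSdef
    have hSne : S.Nonempty := ⟨t1, ⟨le_refl t1, ht2⟩, hu1⟩
    have hSbdd : BddAbove S := ⟨t2, fun x hx => hx.1.2⟩
    have hSclosed : IsClosed S :=
      hucont.preimage_isClosed_of_isClosed isClosed_Icc isClosed_Iic
    set s := sSup S with hsdef
    have hsS : s ∈ S := hSclosed.csSup_mem hSne hSbdd
    have hst2 : s < t2 := lt_of_le_of_ne hsS.1.2 (by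
      intro h; rw [h] at hsS; exact absurd hsS.2 (not_le.mpr hcon))
    have habove : ∀ x, s < x → x ≤ t2 → M + ε < u x := by
      intro x hsx hxt2
      by_contra hc
      push_neg at hc
      have hxS : x ∈ S := ⟨⟨le_trans hsS.1.1 hsx.le, hxt2⟩, hc⟩
      exact absurd (le_csSup hSbdd hxS) (not_le.mpr hsx)
    have hanti : AntitoneOn u (Set.Icc s t2) := by
      apply antitoneOn_of_deriv_nonpos (convex_Icc s t2)
      · intro x hx
        exact (hdiff x (le_trans ht1t0 (le_trans hsS.1.1 hx.1))).continuousAt.continuousWithinAt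
      · intro x hx
        rw [interior_Icc] at hx
        exact (hdiff x (le_trans ht1t0 (le_trans hsS.1.1 hx.1.le))).differentiableWithinAt
      · intro x hx
        rw [interior_Icc] at hx
        have hxge : t0 + τbar ≤ x := le_trans ht1 (le_trans hsS.1.1 hx.1.le)
        have hux : M + ε ≤ u x := (habove x hx.1 hx.2.le).le
        have hM0 : M + 0 ≤ u x := by linarith
        have := hF3 0 le_rfl x hxge hM0
        simpa using this
    have : u t2 ≤ u s :=
      hanti ⟨le_refl s, hst2.le⟩ ⟨hst2.le, le_refl t2⟩ hst2.le
    have : u t2 ≤ M + ε := le_trans this hsS.2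
    exact absurd this (not_le.mpr hcon)
  -- Main eventual bound: for every ε > 0, eventually u t ≤ M + ε
  have hev : ∀ ε : ℝ, 0 < ε → ∀ᶠ t in atTop, u t ≤ M + ε := by
    intro ε hε
    by_cases hcase : ∃ t1, t0 + τbar ≤ t1 ∧ u t1 ≤ M + ε
    · obtain ⟨t1, ht1, hu1⟩ := hcase
      filter_upwards [eventually_ge_atTop t1] with t ht
      exact hstay ε hε.le t1 ht1 hu1 t ht
    · exfalso
      push_neg at hcase
      -- u t > M + ε for all t ≥ t0 + τbar
      set δ : ℝ := B * (Real.exp ε - 1) with hδdef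
      have hδpos : 0 < δ := by
        have : ε + 1 ≤ Real.exp ε := Real.add_one_le_exp ε
        exact mul_pos hB (by linarith)
      set T : ℝ := t0 + 2 * τbar with hTdef
      -- deriv u t ≤ -δ on [T, ∞)
      have hdneg : ∀ t, T ≤ t → deriv u t ≤ -δ := by
        intro t ht
        have hτt := hτ t
        have hshift : t0 + τbar ≤ t - τ t := by linarith [hτt.1, hτt.2]
        have hut : M + ε < u (t - τ t) := hcase (t - τ t) hshift
        have hlow : Real.log (B / A) + ε ≤ u (t - τ t) := by
          simp only [hMdef] at hut
          nlinarith [hB.le]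
        have hexp : B * Real.exp ε ≤ A * Real.exp (u (t - τ t)) := by
          have h3 : Real.exp (Real.log (B / A) + ε) ≤ Real.exp (u (t - τ t)) :=
            Real.exp_le_exp.mpr hlow
          rw [Real.exp_add, Real.exp_log (div_pos hB hA)] at h3
          calc B * Real.exp ε = A * (B / A * Real.exp ε) := by field_simp
            _ ≤ A * Real.exp (u (t - τ t)) := mul_le_mul_of_nonneg_left h3 hA.le
        have := hineq t (by linarith [hτt.1] : t0 ≤ t)
        simp only [hδdef]
        nlinarith
      -- u t + δ t antitone on [T, ∞)
      have hanti : AntitoneOn (fun t => u t + δ * t) (Set.Ici T) := by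
        apply antitoneOn_of_deriv_nonpos (convex_Ici T)
        · intro x hx
          have hxT : T ≤ x := Set.mem_Ici.mp hx
          rw [hTdef] at hxT
          exact ((hdiff x (by linarith)).hasDerivAt.add
            ((hasDerivAt_id x).const_mul δ)).continuousAt.continuousWithinAt
        · intro x hx
          rw [interior_Ici] at hx
          have hxT : T ≤ x := (Set.mem_Ioi.mp hx).le
          rw [hTdef] at hxT
          exact ((hdiff x (by linarith)).hasDerivAt.add
            ((hasDerivAt_id x).const_mul δ)).differentiableAt.differentiableWithinAt
        · intro x hx
          rw [interior_Ici] at hx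
          have hxT : T ≤ x := (Set.mem_Ioi.mp hx).le
          have hxT' : t0 ≤ x := by rw [hTdef] at hxT; linarith
          have hd : HasDerivAt (fun t => u t + δ * t) (deriv u x + δ * 1) x :=
            (hdiff x hxT').hasDerivAt.add
              ((hasDerivAt_id x).const_mul δ)
          rw [hd.deriv]
          have := hdneg x hx.le
          linarith
      -- pick a large time and derive a contradiction
      have hTge : t0 + τbar ≤ T := by simp only [hTdef]; linarith
      have huT : M + ε < u T := hcase T hTge
      set t2 : ℝ := T + (u T - (M + ε)) / δ + 1 with ht2def
      have ht2T : T ≤ t2 := by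
        have h0 : 0 ≤ (u T - (M + ε)) / δ := div_nonneg (by linarith) hδpos.le
        rw [ht2def]; linarith
      have h1 : u t2 + δ * t2 ≤ u T + δ * T :=
        hanti (Set.mem_Ici.mpr le_rfl) (Set.mem_Ici.mpr ht2T) ht2T
      have h2 : u t2 ≤ u T - δ * (t2 - T) := by linarith
      have h3 : δ * (t2 - T) = (u T - (M + ε)) + δ := by
        simp only [ht2def]
        field_simp
        ring
      have h4 : u t2 ≤ M + ε - δ := by
        rw [h3] at h2; linarith
      have h5 : M + ε < u t2 := hcase t2 (le_trans hTge ht2T)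
      linarith
  -- conclude the limsup bound
  by_contra hcon
  push_neg at hcon
  obtain ⟨z, hz1, hz2⟩ := EReal.exists_between_coe_real hcon
  have hMz : M < z := by exact_mod_cast hz1
  have hev' : ∀ᶠ t in atTop, (u t : EReal) ≤ (z : EReal) := by
    filter_upwards [hev (z - M) (by linarith)] with t ht
    exact_mod_cast (by linarith : u t ≤ z)
  have : Filter.limsup (fun t => (u t : EReal)) atTop ≤ (z : EReal) :=
    limsup_le_of_le (by isBoundedDefault) hev'
  exact absurd (lt_of_le_of_lt this hz2) (lt_irrefl _)
end

section
/- Let t0 ∈ ℝ, A, B > 0, τ̄ ≥ 0, and let τ : ℝ → ℝ be continuous with 0 ≤ τ(t) ≤ τ̄ for all t. Let u : ℝ → ℝ be differentiable on [t0, ∞) and satisfy u'(t) ≥ B − A·exp(u(t − τ(t))) for all t ≥ t0. Suppose there is N > 0 with limsup_{t→∞} exp(u(t)) ≤ N. Then liminf_{t→∞} u(t) ≥ ln(B/A) − A·N·τ̄. -/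
open Filter

private lemma slope_aux {u : ℝ → ℝ} {m s t : ℝ} (hst : s ≤ t)
    (hd : ∀ x ∈ Set.Icc s t, DifferentiableAt ℝ u x)
    (h' : ∀ x ∈ Set.Ioo s t, m ≤ deriv u x) :
    u s + m * (t - s) ≤ u t := by
  have hmono : MonotoneOn (fun x => u x - m * x) (Set.Icc s t) := by
    apply monotoneOn_of_deriv_nonneg (convex_Icc s t)
    · exact fun x hx =>
        ((hd x hx).sub (differentiableAt_fun_id.const_mul m)).continuousAt.continuousWithinAt
    · intro x hx
      rw [interior_Icc] at hx
      exact ((hd x (Set.Ioo_subset_Icc_self hx)).sub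
        (differentiableAt_fun_id.const_mul m)).differentiableWithinAt
    · intro x hx
      rw [interior_Icc] at hx
      have h1 : HasDerivAt (fun y => u y - m * y) (deriv u x - m * 1) x :=
        ((hd x (Set.Ioo_subset_Icc_self hx)).hasDerivAt).sub ((hasDerivAt_id x).const_mul m)
      rw [h1.deriv]
      have := h' x hx
      linarith
  have := hmono (Set.left_mem_Icc.2 hst) (Set.right_mem_Icc.2 hst) hst
  simp only [] at this
  linarith

/-- Lower estimate in logarithmic coordinates for the delayed logistic inequality
(`𝕋 = ℝ`, no impulses). -/
theorem log_delay_lower_estimate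
    (t0 A B τbar : ℝ) (hA : 0 < A) (hB : 0 < B) (hτbar : 0 ≤ τbar)
    (τ : ℝ → ℝ) (hτcont : Continuous τ) (hτ : ∀ t, 0 ≤ τ t ∧ τ t ≤ τbar)
    (u : ℝ → ℝ) (hdiff : ∀ t, t0 ≤ t → DifferentiableAt ℝ u t)
    (hineq : ∀ t, t0 ≤ t → B - A * Real.exp (u (t - τ t)) ≤ deriv u t)
    (N : ℝ) (hN : 0 < N)
    (hlimsup : Filter.limsup (fun t => (Real.exp (u t) : EReal)) atTop ≤ (N : EReal)) :
    ((Real.log (B / A) - A * N * τbar : ℝ) : EReal) ≤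
      Filter.liminf (fun t => (u t : EReal)) atTop := by
  have main : ∀ ε : ℝ, 0 < ε → ∀ δ : ℝ, 0 < δ →
      ((Real.log (B / A) - A * (N + ε) * τbar - δ : ℝ) : EReal) ≤
        Filter.liminf (fun t => (u t : EReal)) atTop := by
    intro ε hε δ hδ
    set L := Real.log (B / A) with hLdef
    set K := A * (N + ε) with hKdef
    have hK : 0 < K := by positivity
    -- eventually bound on exp (u t)
    have h1 : ∀ᶠ t in atTop, Real.exp (u t) < N + ε := by
      have hlt : Filter.limsup (fun t => (Real.exp (u t) : EReal)) atTop
          < ((N + ε : ℝ) : EReal) :=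
        lt_of_le_of_lt hlimsup (by exact_mod_cast (by linarith : (N : ℝ) < N + ε))
      filter_upwards [Filter.eventually_lt_of_limsup_lt hlt] with t ht
      exact_mod_cast ht
    obtain ⟨T, hT⟩ := eventually_atTop.1 h1
    set T₁ := max t0 T + τbar with hT₁def
    set T₂ := T₁ + τbar with hT₂def
    have hT₁t0 : t0 ≤ T₁ := le_trans (le_max_left _ _) (le_add_of_nonneg_right hτbar)
    have hT₂t0 : t0 ≤ T₂ := le_trans hT₁t0 (by rw [hT₂def]; linarith)
    -- derivative lower bound on [T₁, ∞)
    have hDer : ∀ r, T₁ ≤ r → B - K ≤ deriv u r := by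
      intro r hr
      have hrt0 : t0 ≤ r := le_trans hT₁t0 hr
      have hτr := hτ r
      have hmax : max t0 T + τbar ≤ r := hr
      have hmT : T ≤ max t0 T := le_max_right t0 T
      have hsub : T ≤ r - τ r := by linarith [hτr.2]
      have hexp : Real.exp (u (r - τ r)) ≤ N + ε := le_of_lt (hT _ hsub)
      have h2 := hineq r hrt0
      have h3 : A * Real.exp (u (r - τ r)) ≤ A * (N + ε) :=
        mul_le_mul_of_nonneg_left hexp hA.le
      rw [hKdef]; linarith
    -- (D) backward estimate via derivative lower bound
    have hD : ∀ s r, T₁ ≤ s → s ≤ r → u s ≤ u r + K * (r - s) := by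
      intro s r hs hsr
      have := slope_aux (m := -K) hsr
        (fun x hx => hdiff x (le_trans hT₁t0 (le_trans hs hx.1)))
        (fun x hx => by
          have := hDer x (le_trans hs hx.1.le)
          linarith)
      linarith
    set η := B - A * Real.exp (L - δ) with hηdef
    have hexpc : Real.exp (L - δ) < B / A := by
      calc Real.exp (L - δ) < Real.exp L := Real.exp_lt_exp.2 (by linarith)
        _ = B / A := Real.exp_log (div_pos hB hA)
    have hηpos : 0 < η := by
      have := (lt_div_iff₀ hA).1 hexpc
      rw [hηdef]; nlinarith
    set c := L - K * τbar - δ with hcdef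
    -- (P) derivative lower bound η when u is below c
    have hP : ∀ r, T₂ ≤ r → u r ≤ c → η ≤ deriv u r := by
      intro r hr hur
      have hτr := hτ r
      have hrT₂ : T₁ + τbar ≤ r := hr
      have hs1 : T₁ ≤ r - τ r := by linarith [hτr.2]
      have hs2 : r - τ r ≤ r := by linarith [hτr.1]
      have hDs := hD (r - τ r) r hs1 hs2
      have hval : u (r - τ r) ≤ L - δ := by
        have hKτ : K * (r - (r - τ r)) ≤ K * τbar := by
          apply mul_le_mul_of_nonneg_left _ hK.le
          linarith [hτr.2]
        have : c + K * τbar = L - δ := by rw [hcdef]; ring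
        linarith
      have hrt0 : t0 ≤ r := le_trans hT₂t0 hr
      have h2 := hineq r hrt0
      have h3 : A * Real.exp (u (r - τ r)) ≤ A * Real.exp (L - δ) :=
        mul_le_mul_of_nonneg_left (Real.exp_le_exp.2 hval) hA.le
      rw [hηdef]; linarith
    -- (G) growth estimate while u stays below c
    have hG : ∀ s r, T₂ ≤ s → s ≤ r → (∀ x ∈ Set.Icc s r, u x ≤ c) →
        u s + η * (r - s) ≤ u r := by
      intro s r hs hsr hbelow
      exact slope_aux (m := η) hsr
        (fun x hx => hdiff x (le_trans hT₂t0 (le_trans hs hx.1)))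
        (fun x hx => hP x (le_trans hs hx.1.le) (hbelow x (Set.Ioo_subset_Icc_self hx)))
    -- Step A: u reaches c somewhere
    obtain ⟨t₁, ht₁T, ht₁c⟩ : ∃ t₁, T₂ ≤ t₁ ∧ c ≤ u t₁ := by
      by_contra hno
      push_neg at hno
      set t := T₂ + (c - u T₂) / η + 1 with htdef
      have hpos : 0 ≤ (c - u T₂) / η :=
        div_nonneg (by linarith [hno T₂ le_rfl]) hηpos.le
      have htT : T₂ ≤ t := by rw [htdef]; linarith
      have hGl := hG T₂ t le_rfl htT (fun x hx => (hno x hx.1).le)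
      have hlt := hno t htT
      have hηmul : η * (t - T₂) = (c - u T₂) + η := by
        rw [htdef]
        field_simp
        ring
      linarith
    -- Step B: u stays above c after t₁
    have hfinal : ∀ r, t₁ ≤ r → c ≤ u r := by
      intro t₂ ht₂
      by_contra hlt
      push_neg at hlt
      set S := Set.Icc t₁ t₂ ∩ u ⁻¹' (Set.Ici c) with hSdef
      have ht₁t0 : t0 ≤ t₁ := le_trans hT₂t0 ht₁T
      have hcontOn : ContinuousOn u (Set.Icc t₁ t₂) := fun x hx =>
        (hdiff x (le_trans ht₁t0 hx.1)).continuousAt.continuousWithinAt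
      have hSclosed : IsClosed S :=
        hcontOn.preimage_isClosed_of_isClosed isClosed_Icc isClosed_Ici
      have hScomp : IsCompact S :=
        isCompact_Icc.of_isClosed_subset hSclosed Set.inter_subset_left
      have hSne : S.Nonempty := ⟨t₁, ⟨le_rfl, ht₂⟩, ht₁c⟩
      have hmem := hScomp.sSup_mem hSne
      set s₀ := sSup S with hs₀def
      obtain ⟨⟨hs₀1, hs₀2⟩, hs₀c⟩ := hmem
      have hs₀c' : c ≤ u s₀ := hs₀c
      have hs₀lt : s₀ < t₂ :=
        lt_of_le_of_ne hs₀2 (fun h => absurd (h ▸ hs₀c') (not_le.2 hlt))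
      have hIoc : ∀ x, s₀ < x → x ≤ t₂ → u x < c := by
        intro x hx1 hx2
        by_contra hxc
        push_neg at hxc
        have hxS : x ∈ S := ⟨⟨le_trans hs₀1 hx1.le, hx2⟩, hxc⟩
        have : x ≤ s₀ := le_csSup hScomp.bddAbove hxS
        linarith
      have hcontAt : ContinuousAt u s₀ := (hdiff s₀ (le_trans ht₁t0 hs₀1)).continuousAt
      have hev1 : ∀ᶠ x in nhds s₀, u t₂ < u x :=
        hcontAt (Ioi_mem_nhds (lt_of_lt_of_le hlt hs₀c'))
      have hev2 : ∀ᶠ x in nhds s₀, x < t₂ := Iio_mem_nhds hs₀lt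
      have hev3 : ∀ᶠ x in nhdsWithin s₀ (Set.Ioi s₀), s₀ < x :=
        eventually_mem_nhdsWithin
      obtain ⟨s, ⟨hsu, hslt⟩, hs3⟩ :=
        (((hev1.and hev2).filter_mono nhdsWithin_le_nhds).and hev3).exists
      have hGb := hG s t₂ (le_trans ht₁T (le_trans hs₀1 hs3.le)) hslt.le
        (fun x hx => (hIoc x (lt_of_lt_of_le hs3 hx.1) hx.2).le)
      have hnn : 0 ≤ η * (t₂ - s) := mul_nonneg hηpos.le (by linarith)
      linarith
    -- pass to liminf
    have hev : ∀ᶠ t in atTop, ((c : ℝ) : EReal) ≤ (u t : EReal) := by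
      filter_upwards [eventually_ge_atTop t₁] with t ht
      exact EReal.coe_le_coe_iff.2 (hfinal t ht)
    have hconst : ((c : ℝ) : EReal)
        = Filter.liminf (fun _ : ℝ => ((c : ℝ) : EReal)) atTop :=
      (Filter.liminf_const _).symm
    calc ((L - K * τbar - δ : ℝ) : EReal) = ((c : ℝ) : EReal) := by rw [hcdef]
      _ = Filter.liminf (fun _ : ℝ => ((c : ℝ) : EReal)) atTop := hconst
      _ ≤ Filter.liminf (fun t => (u t : EReal)) atTop := Filter.liminf_le_liminf hev
  -- conclude by letting ε, δ → 0
  by_contra hcon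
  push_neg at hcon
  obtain ⟨y, hy1, hy2⟩ := EReal.exists_between_coe_real hcon
  have hXy : y < Real.log (B / A) - A * N * τbar := by exact_mod_cast hy2
  set d := Real.log (B / A) - A * N * τbar - y with hddef
  have hdpos : 0 < d := by rw [hddef]; linarith
  have hεpos : 0 < d / (2 * (A * τbar + 1)) := by positivity
  have hmain := main _ hεpos (d / 2) (by positivity)
  have hcalc : A * (d / (2 * (A * τbar + 1))) * τbar ≤ d / 2 := by
    rw [show A * (d / (2 * (A * τbar + 1))) * τbar
        = d * (A * τbar) / (2 * (A * τbar + 1)) from by ring,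
      div_le_div_iff₀ (by positivity) (by norm_num : (0:ℝ) < 2)]
    nlinarith [mul_nonneg hA.le hτbar]
  have hyc : y ≤ Real.log (B / A) - A * (N + d / (2 * (A * τbar + 1))) * τbar - d / 2 := by
    have : A * (N + d / (2 * (A * τbar + 1))) * τbar
        = A * N * τbar + A * (d / (2 * (A * τbar + 1))) * τbar := by ring
    rw [this]
    rw [hddef] at hcalc ⊢
    linarith
  have : (y : EReal) ≤ Filter.liminf (fun t => (u t : EReal)) atTop :=
    le_trans (EReal.coe_le_coe_iff.2 hyc) hmain
  exact absurd hy1 (not_lt.2 this)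
end

section
/- Let t0 ∈ ℤ, A > 0, 0 < B < 1, and τ̄ ∈ ℕ. Let τ : ℤ → ℕ satisfy τ(t) ≤ τ̄ for all t, and let x : ℤ → ℝ satisfy x(t+1) ≤ x(t) + B − A·exp(x(t − τ(t))) for all t ≥ t0. Then limsup_{t→∞} x(t) ≤ ln(B/A) + B·τ̄/(1 − B). -/
open Filter

/-- Upper estimate in logarithmic coordinates for the discrete delayed logistic
inequality (`𝕋 = ℤ`, no impulses). -/
theorem discrete_log_delay_upper_estimate
    (t0 : ℤ) (A B : ℝ) (τbar : ℕ)
    (hA : 0 < A) (hB0 : 0 < B) (hB1 : B < 1)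
    (τ : ℤ → ℕ) (hτ : ∀ t, τ t ≤ τbar)
    (x : ℤ → ℝ)
    (hineq : ∀ t, t0 ≤ t →
      x (t + 1) ≤ x t + B - A * Real.exp (x (t - (τ t : ℤ)))) :
    Filter.limsup (fun t : ℤ => (x t : EReal)) atTop ≤
      ((Real.log (B / A) + B * (τbar : ℝ) / (1 - B) : ℝ) : EReal) := by
  set L : ℝ := Real.log (B / A) + B * τbar with hLdef
  have hBA : (0:ℝ) < B / A := div_pos hB0 hA
  -- one step growth bound
  have hstep : ∀ t, t0 ≤ t → x (t + 1) ≤ x t + B := by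
    intro t ht
    have h := hineq t ht
    nlinarith [mul_pos hA (Real.exp_pos (x (t - (τ t : ℤ))))]
  -- n step growth bound
  have hgrow : ∀ (n : ℕ) (t : ℤ), t0 ≤ t → x (t + n) ≤ x t + B * n := by
    intro n
    induction n with
    | zero => intro t ht; simp
    | succ n ih =>
      intro t ht
      have h1 := ih t ht
      have h2 := hstep (t + n) (by omega)
      have hidx : t + ((n : ℤ) + 1) = (t + n) + 1 := by ring
      push_cast
      rw [hidx]
      push_cast at h1 h2 ⊢
      linarith
  -- contraction of the excess over L
  have hcontr : ∀ t, t0 + (τbar : ℤ) ≤ t → x (t + 1) - L ≤ (1 - B) * (x t - L) := by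
    intro t ht
    have hτt := hτ t
    have hts : t0 ≤ t - (τ t : ℤ) := by omega
    have h1 : x t ≤ x (t - (τ t : ℤ)) + B * (τ t : ℕ) := by
      have := hgrow (τ t) (t - (τ t : ℤ)) hts
      have hidx : t - (τ t : ℤ) + (τ t : ℤ) = t := by ring
      rwa [hidx] at this
    -- lower bound for the delayed term
    have h2 : x t - B * τbar ≤ x (t - (τ t : ℤ)) := by
      have : B * (τ t : ℝ) ≤ B * (τbar : ℝ) := by
        apply mul_le_mul_of_nonneg_left _ hB0.le
        exact_mod_cast hτt
      linarith
    have h3 : Real.exp (x t - B * τbar) ≤ Real.exp (x (t - (τ t : ℤ))) :=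
      Real.exp_le_exp.2 h2
    -- rewrite B * exp (x t - L) = A * exp (x t - B * τbar)
    have hkey : B * Real.exp (x t - L) = A * Real.exp (x t - B * τbar) := by
      rw [hLdef]
      rw [show x t - (Real.log (B / A) + B * τbar)
          = (x t - B * τbar) - Real.log (B / A) by ring]
      rw [Real.exp_sub, Real.exp_log hBA]
      field_simp
    have h4 : B * Real.exp (x t - L) ≤ A * Real.exp (x (t - (τ t : ℤ))) := by
      rw [hkey]
      exact mul_le_mul_of_nonneg_left h3 hA.le
    have h5 : x t - L + 1 ≤ Real.exp (x t - L) := Real.add_one_le_exp _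
    have h6 := hineq t (by omega)
    nlinarith
  set t1 : ℤ := t0 + (τbar : ℤ) with ht1def
  set E : ℕ → ℝ := fun n => max (x (t1 + (n : ℤ)) - L) 0 with hEdef
  have hB1' : (0:ℝ) ≤ 1 - B := by linarith
  have hEstep : ∀ n, E (n + 1) ≤ (1 - B) * E n := by
    intro n
    have h1 : x (t1 + ((n : ℤ) + 1)) - L ≤ (1 - B) * (x (t1 + (n : ℤ)) - L) := by
      have := hcontr (t1 + (n : ℤ)) (by omega)
      have hidx : t1 + ((n : ℤ) + 1) = t1 + (n : ℤ) + 1 := by ring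
      rwa [hidx]
    have h2 : x (t1 + (n : ℤ)) - L ≤ E n := le_max_left _ _
    have h3 : (1 - B) * (x (t1 + (n : ℤ)) - L) ≤ (1 - B) * E n :=
      mul_le_mul_of_nonneg_left h2 hB1'
    have h4 : (0:ℝ) ≤ (1 - B) * E n :=
      mul_nonneg hB1' (le_max_right _ _)
    have : E (n + 1) = max (x (t1 + ((n : ℤ) + 1)) - L) 0 := by
      simp [hEdef]
    rw [this]
    exact max_le (by linarith) h4
  have hEn : ∀ n, E n ≤ (1 - B) ^ n * E 0 := by
    intro n
    induction n with
    | zero => simp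
    | succ n ih =>
      calc E (n + 1) ≤ (1 - B) * E n := hEstep n
        _ ≤ (1 - B) * ((1 - B) ^ n * E 0) := mul_le_mul_of_nonneg_left ih hB1'
        _ = (1 - B) ^ (n + 1) * E 0 := by ring
  -- comparison function
  set f : ℤ → ℝ := fun t => L + (1 - B) ^ ((t - t1).toNat) * E 0 with hfdef
  have hxf : ∀ t, t1 ≤ t → x t ≤ f t := by
    intro t ht
    have hidx : t = t1 + ((t - t1).toNat : ℤ) := by omega
    have h1 : x (t1 + (((t - t1).toNat : ℕ) : ℤ)) - L ≤ E ((t - t1).toNat) :=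
      le_max_left _ _
    have h2 := hEn ((t - t1).toNat)
    have hx' : x (t1 + (((t - t1).toNat : ℕ) : ℤ)) = x t := by rw [← hidx]
    rw [hx'] at h1
    show x t ≤ L + (1 - B) ^ ((t - t1).toNat) * E 0
    linarith
  -- f tends to L
  have htendN : Tendsto (fun n : ℕ => (1 - B) ^ n) atTop (nhds 0) :=
    tendsto_pow_atTop_nhds_zero_of_lt_one hB1' (by linarith)
  have htoNat : Tendsto (fun t : ℤ => (t - t1).toNat) atTop atTop := by
    rw [tendsto_atTop_atTop]
    intro b
    exact ⟨t1 + (b : ℤ), fun a ha => by omega⟩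
  have htendf : Tendsto f atTop (nhds L) := by
    have h1 : Tendsto (fun t : ℤ => (1 - B) ^ ((t - t1).toNat)) atTop (nhds 0) :=
      htendN.comp htoNat
    have h2 : Tendsto (fun t : ℤ => L + (1 - B) ^ ((t - t1).toNat) * E 0)
        atTop (nhds (L + 0 * E 0)) :=
      tendsto_const_nhds.add (h1.mul tendsto_const_nhds)
    simpa [hfdef] using h2
  have htendfE : Tendsto (fun t : ℤ => ((f t : ℝ) : EReal)) atTop (nhds ((L : ℝ) : EReal)) :=
    (EReal.tendsto_coe).2 htendf
  have hlimf : Filter.limsup (fun t : ℤ => ((f t : ℝ) : EReal)) atTop = ((L : ℝ) : EReal) :=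
    htendfE.limsup_eq
  have hle1 : Filter.limsup (fun t : ℤ => (x t : EReal)) atTop ≤
      Filter.limsup (fun t : ℤ => ((f t : ℝ) : EReal)) atTop := by
    apply Filter.limsup_le_limsup
    · filter_upwards [Filter.eventually_ge_atTop t1] with t ht
      exact_mod_cast hxf t ht
    · isBoundedDefault
    · isBoundedDefault
  have hLM : L ≤ Real.log (B / A) + B * (τbar : ℝ) / (1 - B) := by
    rw [hLdef]
    have h1B : (0:ℝ) < 1 - B := by linarith
    have : B * (τbar : ℝ) ≤ B * (τbar : ℝ) / (1 - B) := by
      rw [le_div_iff₀ h1B]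
      nlinarith [mul_nonneg hB0.le (Nat.cast_nonneg τbar : (0:ℝ) ≤ (τbar : ℝ))]
    linarith
  calc Filter.limsup (fun t : ℤ => (x t : EReal)) atTop
      ≤ ((L : ℝ) : EReal) := hle1.trans_eq hlimf
    _ ≤ _ := by exact_mod_cast hLM
end

section
/- Let t0 ∈ ℤ, A, B > 0, and τ̄ ∈ ℕ. Let τ : ℤ → ℕ satisfy τ(t) ≤ τ̄ for all t, and let x : ℤ → ℝ satisfy x(t+1) ≥ x(t) + B − A·exp(x(t − τ(t))) for all t ≥ t0. Suppose there is N > 0 with limsup_{t→∞} exp(x(t)) ≤ N and 1 − A·N > 0. Then liminf_{t→∞} x(t) ≥ ln(B/A) + τ̄·ln(1 − A·N). -/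
open Filter

private lemma steps_lower (g : ℤ → ℝ) (c : ℝ) :
    ∀ (n : ℕ) (s : ℤ), (∀ r : ℤ, s ≤ r → r < s + n → g r + c ≤ g (r + 1)) →
      g s + n * c ≤ g (s + n) := by
  intro n
  induction n with
  | zero => intro s _; simp
  | succ k ih =>
    intro s h
    have h1 : g s + k * c ≤ g (s + k) := by
      refine ih s (fun r hr hr' => h r hr ?_)
      have : (k : ℤ) ≤ (k : ℤ) + 1 := by omega
      push_cast
      omega
    have h2 : g (s + k) + c ≤ g (s + k + 1) := by
      refine h (s + k) (by omega) (by push_cast; omega)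
    have harith : s + ((k : ℕ) + 1 : ℕ) = s + k + 1 := by push_cast; ring
    rw [harith]
    push_cast
    nlinarith [h1, h2]

private lemma key_lower (t0 : ℤ) (A B M : ℝ) (τbar : ℕ)
    (hA : 0 < A) (hB : 0 < B) (hAM : A * M < 1) (hAMpos : 0 < 1 - A * M)
    (hMpos : 0 < M)
    (τ : ℤ → ℕ) (hτ : ∀ t, τ t ≤ τbar)
    (x : ℤ → ℝ)
    (hineq : ∀ t, t0 ≤ t →
      x t + B - A * Real.exp (x (t - (τ t : ℤ))) ≤ x (t + 1))
    (hbdd : ∀ᶠ t : ℤ in atTop, Real.exp (x t) ≤ M) :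
    ((Real.log (B / A) + (τbar : ℝ) * Real.log (1 - A * M) : ℝ) : EReal) ≤
      Filter.liminf (fun t : ℤ => (x t : EReal)) atTop := by
  obtain ⟨T0', hT0'⟩ := eventually_atTop.1 hbdd
  set L : ℝ := Real.log (B / A) with hL
  set c : ℝ := Real.log (1 - A * M) with hc
  set m' : ℝ := L + (τbar : ℝ) * c with hm'
  set T0 : ℤ := max T0' t0 with hT0def
  have hT0 : ∀ t : ℤ, T0 ≤ t → Real.exp (x t) ≤ M := by
    intro t ht; exact hT0' t (le_trans (le_max_left _ _) ht)
  have ht0T0 : t0 ≤ T0 := le_max_right _ _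
  have hc0 : c ≤ 0 := Real.log_nonpos (by linarith) (by nlinarith)
  have hexpL : Real.exp L = B / A := Real.exp_log (div_pos hB hA)
  have hAexpL : A * Real.exp L = B := by
    rw [hexpL]; field_simp
  -- per-step lower bound
  have hstep : ∀ r : ℤ, T0 + (τbar : ℤ) ≤ r → x r + c ≤ x (r + 1) := by
    intro r hr
    have h1 := hineq r (by omega)
    have h2 : Real.exp (x (r - (τ r : ℤ))) ≤ M := by
      refine hT0 _ ?_
      have := hτ r; omega
    have h3 : c ≤ 1 - A * M - 1 := by
      have := Real.log_le_sub_one_of_pos hAMpos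
      linarith
    nlinarith [Real.exp_pos (x (r - (τ r : ℤ)))]
  -- key pointwise inequality
  have hf : ∀ y : ℝ, L ≤ y → Real.exp y ≤ M → L ≤ y + B - A * Real.exp y := by
    intro y hy hyM
    have h1 : L - y + 1 ≤ Real.exp (L - y) := Real.add_one_le_exp _
    have h2 : Real.exp (L - y) * Real.exp y = Real.exp L := by
      rw [← Real.exp_add]; ring_nf
    have hey : (0 : ℝ) < Real.exp y := Real.exp_pos _
    have h3 : Real.exp y - Real.exp L ≤ Real.exp y * (y - L) := by nlinarith
    have h4 : Real.exp y * (y - L) ≤ M * (y - L) := by nlinarith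
    have h5 : A * (Real.exp y - Real.exp L) ≤ A * M * (y - L) := by nlinarith
    nlinarith
  -- dichotomy
  have hD : ∀ t : ℤ, T0 + 2 * (τbar : ℤ) ≤ t → min (x t) m' ≤ x (t + 1) := by
    intro t ht
    set s : ℤ := t - (τ t : ℤ) with hs
    have hsge : T0 + (τbar : ℤ) ≤ s := by have := hτ t; omega
    have h1 := hineq t (by omega)
    by_cases hxs : x s ≤ L
    · have : Real.exp (x s) ≤ Real.exp L := Real.exp_le_exp.2 hxs
      have : A * Real.exp (x s) ≤ B := by nlinarith
      have : x t ≤ x (t + 1) := by linarith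
      calc min (x t) m' ≤ x t := min_le_left _ _
        _ ≤ x (t + 1) := this
    · push_neg at hxs
      have hexps : Real.exp (x s) ≤ M := hT0 _ (by omega)
      have hwalk : x s + (τ t : ℝ) * c ≤ x (s + (τ t : ℤ)) := by
        refine steps_lower x c (τ t) s (fun r hr hr' => hstep r (by omega))
      have hst : s + (τ t : ℤ) = t := by omega
      rw [hst] at hwalk
      have hτc : (τbar : ℝ) * c ≤ (τ t : ℝ) * c := by
        have h1 : (τ t : ℝ) ≤ (τbar : ℝ) := by exact_mod_cast hτ t
        nlinarith
      have hkey := hf (x s) (le_of_lt hxs) hexps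
      have : m' ≤ x (t + 1) := by
        simp only [hm']
        nlinarith
      calc min (x t) m' ≤ m' := min_le_right _ _
        _ ≤ x (t + 1) := this
  -- main contradiction argument
  by_contra hcon
  push_neg at hcon
  -- (a) all values below m' after T0 + 2τbar
  have hall : ∀ t : ℤ, T0 + 2 * (τbar : ℤ) ≤ t → x t < m' := by
    intro t ht
    by_contra hge
    push_neg at hge
    have hind : ∀ n : ℕ, m' ≤ x (t + n) := by
      intro n
      induction n with
      | zero => simpa using hge
      | succ k ih =>
        have hD' := hD (t + k) (by omega)
        have : min (x (t + k)) m' = m' := min_eq_right (le_trans (le_refl _) ih) |>.symm ▸ rfl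
        have hmin : m' ≤ min (x (t + k)) m' := le_min ih (le_refl _)
        have harith : t + ((k : ℕ) + 1 : ℕ) = t + k + 1 := by push_cast; ring
        rw [harith]
        exact le_trans hmin hD'
    have hev : ∀ᶠ r : ℤ in atTop, (m' : EReal) ≤ (x r : EReal) := by
      rw [eventually_atTop]
      refine ⟨t, fun r hr => ?_⟩
      have : r = t + ((r - t).toNat : ℤ) := by omega
      rw [this]
      exact_mod_cast hind (r - t).toNat
    have : (m' : EReal) ≤ Filter.liminf (fun t : ℤ => (x t : EReal)) atTop :=
      Filter.le_liminf_of_le (by isBoundedDefault) hev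
    exact absurd this (not_le.2 hcon)
  -- (b) eventually nondecreasing
  have hτbc : (τbar : ℝ) * c ≤ 0 := mul_nonpos_of_nonneg_of_nonpos (Nat.cast_nonneg _) hc0
  have hm'L : m' ≤ L := by simp only [hm']; linarith
  have hmono : ∀ t : ℤ, T0 + 3 * (τbar : ℤ) + 1 ≤ t → x t ≤ x (t + 1) := by
    intro t ht
    set s : ℤ := t - (τ t : ℤ) with hs
    have hxs : x s < m' := hall s (by have := hτ t; omega)
    have h1 := hineq t (by omega)
    have : Real.exp (x s) ≤ Real.exp L := Real.exp_le_exp.2 (by linarith)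
    have : A * Real.exp (x s) ≤ B := by nlinarith
    linarith
  -- (c) pick q with liminf < q < m'
  obtain ⟨q, hq1, hq2⟩ := EReal.exists_between_coe_real hcon
  have hq2' : q < m' := by exact_mod_cast hq2
  have hfreq : ∀ t1 : ℤ, ∃ t : ℤ, t1 ≤ t ∧ x t < q := by
    intro t1
    by_contra hno
    push_neg at hno
    have hev : ∀ᶠ r : ℤ in atTop, (q : EReal) ≤ (x r : EReal) := by
      rw [eventually_atTop]
      exact ⟨t1, fun r hr => by exact_mod_cast hno r hr⟩
    have : (q : EReal) ≤ Filter.liminf (fun t : ℤ => (x t : EReal)) atTop :=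
      Filter.le_liminf_of_le (by isBoundedDefault) hev
    exact absurd this (not_le.2 hq1)
  -- monotonicity propagation
  have hmono' : ∀ (t : ℤ), T0 + 3 * (τbar : ℤ) + 1 ≤ t → ∀ n : ℕ, x t ≤ x (t + n) := by
    intro t ht n
    induction n with
    | zero => simp
    | succ k ih =>
      have h2 := hmono (t + k) (by omega)
      have harith : t + ((k : ℕ) + 1 : ℕ) = t + k + 1 := by push_cast; ring
      rw [harith]
      exact le_trans ih h2
  -- (d) all values below q
  have hallq : ∀ t : ℤ, T0 + 3 * (τbar : ℤ) + 1 ≤ t → x t < q := by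
    intro t ht
    obtain ⟨t', ht', hxt'⟩ := hfreq t
    have : x t ≤ x t' := by
      have := hmono' t ht (t' - t).toNat
      have he : t + ((t' - t).toNat : ℤ) = t' := by omega
      rwa [he] at this
    linarith
  -- (e) positive drift
  set δ : ℝ := B - A * Real.exp q with hδ
  have hδpos : 0 < δ := by
    have : Real.exp q < Real.exp L := Real.exp_lt_exp.2 (by linarith)
    simp only [hδ]; nlinarith
  -- (f) contradiction via unbounded growth
  set S : ℤ := T0 + 4 * (τbar : ℤ) + 1 with hS
  have hdrift : ∀ r : ℤ, S ≤ r → x r + δ ≤ x (r + 1) := by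
    intro r hr
    set s : ℤ := r - (τ r : ℤ) with hs
    have hxs : x s < q := hallq s (by have := hτ r; omega)
    have h1 := hineq r (by omega)
    have : Real.exp (x s) ≤ Real.exp q := Real.exp_le_exp.2 (le_of_lt hxs)
    have : A * Real.exp (x s) ≤ A * Real.exp q := by nlinarith
    simp only [hδ] at *
    linarith
  obtain ⟨n, hn⟩ := exists_nat_ge ((q - x S) / δ)
  have hwalk : x S + (n : ℝ) * δ ≤ x (S + n) :=
    steps_lower x δ n S (fun r hr _ => hdrift r hr)
  have hlt : x (S + n) < q := hallq (S + n) (by omega)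
  have : q - x S ≤ (n : ℝ) * δ := by
    rw [div_le_iff₀ hδpos] at hn
    linarith
  linarith

/-- Lower estimate in logarithmic coordinates for the discrete delayed logistic
inequality (`𝕋 = ℤ`, no impulses). -/
theorem discrete_log_delay_lower_estimate
    (t0 : ℤ) (A B : ℝ) (τbar : ℕ)
    (hA : 0 < A) (hB : 0 < B)
    (τ : ℤ → ℕ) (hτ : ∀ t, τ t ≤ τbar)
    (x : ℤ → ℝ)
    (hineq : ∀ t, t0 ≤ t →
      x t + B - A * Real.exp (x (t - (τ t : ℤ))) ≤ x (t + 1))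
    (N : ℝ) (hN : 0 < N)
    (hlimsup : Filter.limsup (fun t : ℤ => (Real.exp (x t) : EReal)) atTop ≤ (N : EReal))
    (hAN : 0 < 1 - A * N) :
    ((Real.log (B / A) + (τbar : ℝ) * Real.log (1 - A * N) : ℝ) : EReal) ≤
      Filter.liminf (fun t : ℤ => (x t : EReal)) atTop := by
  by_contra hcon
  push_neg at hcon
  obtain ⟨z, hz1, hz2⟩ := EReal.exists_between_coe_real hcon
  have hz2' : z < Real.log (B / A) + (τbar : ℝ) * Real.log (1 - A * N) := by
    exact_mod_cast hz2
  set target : ℝ := Real.log (B / A) + (τbar : ℝ) * Real.log (1 - A * N) with htarget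
  set ε : ℝ := target - z with hε
  have hεpos : 0 < ε := by simp only [hε]; linarith
  set ε' : ℝ := ε / ((τbar : ℝ) + 1) with hε'
  have hε'pos : 0 < ε' := by positivity
  set M : ℝ := N + (1 - A * N) * (1 - Real.exp (-ε')) / A with hM
  have hexpε' : Real.exp (-ε') < 1 := by
    rw [Real.exp_lt_one_iff]; linarith
  have hexpε'pos : 0 < Real.exp (-ε') := Real.exp_pos _
  have hMN : N < M := by
    have h1 : 0 < (1 - A * N) * (1 - Real.exp (-ε')) / A := by
      apply div_pos; nlinarith; exact hA
    simp only [hM]; linarith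
  have hAM : A * M = 1 - (1 - A * N) * Real.exp (-ε') := by
    simp only [hM]; field_simp; ring
  have h1AM : 1 - A * M = (1 - A * N) * Real.exp (-ε') := by
    rw [hAM]; ring
  have hAMlt : A * M < 1 := by
    rw [hAM]; nlinarith
  have hAMpos : 0 < 1 - A * M := by
    rw [h1AM]; positivity
  have hMpos : 0 < M := lt_trans hN hMN
  have hbdd : ∀ᶠ t : ℤ in atTop, Real.exp (x t) ≤ M := by
    have hlt : Filter.limsup (fun t : ℤ => (Real.exp (x t) : EReal)) atTop < (M : EReal) :=
      lt_of_le_of_lt hlimsup (by exact_mod_cast hMN)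
    filter_upwards [Filter.eventually_lt_of_limsup_lt hlt] with t ht
    exact le_of_lt (by exact_mod_cast ht)
  have hkey := key_lower t0 A B M τbar hA hB hAMlt hAMpos hMpos τ hτ x hineq hbdd
  have hlog : Real.log (1 - A * M) = Real.log (1 - A * N) - ε' := by
    rw [h1AM, Real.log_mul (by linarith) (ne_of_gt hexpε'pos), Real.log_exp]
    ring
  have hlb : z ≤ Real.log (B / A) + (τbar : ℝ) * Real.log (1 - A * M) := by
    rw [hlog]
    have h1 : (τbar : ℝ) * ε' ≤ ε := by
      have h2 : (τbar : ℝ) ≤ (τbar : ℝ) + 1 := by linarith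
      have h3 : ε' * ((τbar : ℝ) + 1) = ε := by
        simp only [hε']; field_simp
      nlinarith
    simp only [hε] at h1
    ring_nf
    ring_nf at h1 ⊢
    rw [htarget, div_eq_mul_inv] at h1
    nlinarith
  have : (z : EReal) ≤ Filter.liminf (fun t : ℤ => (x t : EReal)) atTop :=
    le_trans (by exact_mod_cast hlb) hkey
  exact absurd this (not_le.2 hz1)
end

section
/- Fix n, m ≥ 1 and t0 ∈ ℝ. For i, l ∈ {1,…,n} and j, h ∈ {1,…,m}, let b_i, a_{il}, c_{ih}, r_j, d_{jl}, e_{jh} : ℝ → ℝ be nonnegative bounded continuous functions, and let τ_{il}, δ_{ih}, ξ_{jl}, η_{jh} : ℝ → ℝ be nonnegative bounded continuous delay functions. Write f^U = sup_{t∈ℝ} f(t), f^L = inf_{t∈ℝ} f(t), τ⁺ = max_{i,l} sup τ_{il}, and η⁺ = max_{j,h} sup η_{jh}. Assume b_i^L > 0, a_{ii}^L > 0 and e_{jj}^L > 0 for all i, j. Define x_i^∨ = ln(b_i^U/a_{ii}^L) + b_i^U·τ⁺; D_j = Σ_{l=1}^n d_{jl}^U·e^{x_l^∨} and y_j^∨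 = ln(D_j/e_{jj}^L) + D_j·η⁺ (assume D_j > 0); P_i = b_i^L − Σ_{l≠i} a_{il}^U·e^{x_l^∨} − Σ_{h=1}^m c_{ih}^U·e^{y_h^∨} and x_i^∧ = ln(P_i/a_{ii}^U) − a_{ii}^U·e^{x_i^∨}·τ⁺ (assume P_i > 0); Q_j = Σ_{l=1}^n d_{jl}^L·e^{x_l^∧} − r_j^U − Σ_{h≠j} e_{jh}^U·e^{y_h^∨} and y_j^∧ = ln(Q_j/e_{jj}^U) − e_{jj}^U·e^{y_j^∨}·η⁺ (assume Q_j > 0). Let x_1,…,x_n, y_1,…,y_m : ℝ → ℝ be differentiable on [t0, ∞) and satisfy, for all t ≥ t0, x_i'(t) = b_i(t) − Σ_{l=1}^n a_{il}(t)·exp(x_l(t − τ_{il}(t))) − Σ_{h=1}^m c_{ih}(t)·exp(y_h(t − δ_{ih}(t))) and y_j'(t) = −r_j(t) + Σ_{l=1}^n d_{jl}(t)·exp(x_l(t − ξ_{jl}(t))) − Σ_{h=1}^m e_{jh}(t)·exp(y_h(t − η_{jh}(t))). Then for every i and j: x_i^∧ ≤ liminf_{t→∞} x_i(t) ≤ limsup_{t→∞}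 x_i(t) ≤ x_i^∨ and y_j^∧ ≤ liminf_{t→∞} y_j(t) ≤ limsup_{t→∞} y_j(t) ≤ y_j^∨. In particular the system is permanent. -/
open Filter Topology


/-- If `deriv g ≤ B` on `[s,t]`, then `g t - g s ≤ B * (t - s)`. -/
lemma sub_le_of_deriv_le' {g : ℝ → ℝ} {s t B : ℝ} (hst : s ≤ t)
    (hdiff : ∀ u ∈ Set.Icc s t, DifferentiableAt ℝ g u)
    (hB : ∀ u ∈ Set.Icc s t, deriv g u ≤ B) : g t - g s ≤ B * (t - s) := by
  set h : ℝ → ℝ := fun u => B * u - g u with hh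
  have hd : ∀ u ∈ Set.Icc s t, HasDerivAt h (B - deriv g u) u := by
    intro u hu
    have h1 : HasDerivAt (fun x : ℝ => B * x) (B * 1) u := (hasDerivAt_id u).const_mul B
    have := h1.sub (hdiff u hu).hasDerivAt
    simp only [mul_one] at this
    exact this
  have hmono : MonotoneOn h (Set.Icc s t) := by
    apply monotoneOn_of_deriv_nonneg (convex_Icc s t)
    · exact fun u hu => ((hd u hu).continuousAt).continuousWithinAt
    · intro u hu
      have hu' : u ∈ Set.Icc s t := interior_subset hu
      exact ((hd u hu').differentiableAt).differentiableWithinAt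
    · intro u hu
      have hu' : u ∈ Set.Icc s t := interior_subset hu
      rw [(hd u hu').deriv]
      have := hB u hu'
      linarith
  have := hmono (Set.left_mem_Icc.2 hst) (Set.right_mem_Icc.2 hst) hst
  simp only [hh] at this
  linarith

/-- If eventually `g t > M → deriv g t ≤ -c` with `c > 0`, then eventually `g t ≤ M`. -/
lemma eventually_le_of_deriv_neg {g : ℝ → ℝ} {T M c : ℝ} (hc : 0 < c)
    (hdiff : ∀ t, T ≤ t → DifferentiableAt ℝ g t)
    (H : ∀ t, T ≤ t → M < g t → deriv g t ≤ -c) :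
    ∀ᶠ t in atTop, g t ≤ M := by
  -- step 1: some t1 ≥ T with g t1 ≤ M
  have step1 : ∃ t1, T ≤ t1 ∧ g t1 ≤ M := by
    by_contra hcon
    push_neg at hcon
    have hall : ∀ t, T ≤ t → deriv g t ≤ -c := fun t ht => H t ht (hcon t ht)
    -- g t ≤ g T - c (t - T) for t ≥ T
    have key : ∀ t, T ≤ t → g t - g T ≤ (-c) * (t - T) := by
      intro t ht
      refine sub_le_of_deriv_le' ht (fun u hu => hdiff u hu.1) (fun u hu => hall u hu.1)
    have hgT : M < g T := hcon T le_rfl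
    have hdivnn : 0 ≤ (g T - M) / c := div_nonneg (by linarith) hc.le
    have ht : T ≤ T + (g T - M) / c + 1 := by linarith
    have h1 := key _ ht
    have h2 : M < g (T + (g T - M) / c + 1) := hcon _ ht
    have heq : (-c) * (T + (g T - M) / c + 1 - T) = -(g T - M) - c := by
      field_simp
      ring
    rw [heq] at h1
    linarith
  obtain ⟨t1, ht1T, ht1⟩ := step1
  rw [eventually_atTop]
  refine ⟨t1, fun t2 ht2 => ?_⟩
  by_contra hcon
  push_neg at hcon
  -- s = sup of points in [t1,t2] with g ≤ M
  obtain ⟨S, hSdef⟩ : ∃ S : Set ℝ, S = {u | u ∈ Set.Icc t1 t2 ∧ g u ≤ M} := ⟨_, rfl⟩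
  have hScomp : IsCompact S := by
    have hclosed : IsClosed S := by
      have hgc : ContinuousOn g (Set.Icc t1 t2) :=
        fun u hu => ((hdiff u (le_trans ht1T hu.1)).continuousAt).continuousWithinAt
      have : S = Set.Icc t1 t2 ∩ g ⁻¹' (Set.Iic M) := hSdef
      rw [this]
      exact (hgc.preimage_isClosed_of_isClosed isClosed_Icc isClosed_Iic)
    refine (isCompact_Icc (a := t1) (b := t2)).of_isClosed_subset hclosed (fun u hu => ?_)
    rw [hSdef] at hu
    exact hu.1
  have hSne : S.Nonempty := ⟨t1, hSdef ▸ ⟨⟨le_rfl, ht2⟩, ht1⟩⟩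
  set s := sSup S with hsdef
  have hsS' : s ∈ S := hScomp.sSup_mem hSne
  rw [hSdef] at hsS'
  have hsS : s ∈ Set.Icc t1 t2 ∧ g s ≤ M := hsS'
  have hs2 : s < t2 := lt_of_le_of_ne hsS.1.2 (by rintro rfl; exact absurd hsS.2 (not_le.2 hcon))
  have hgt : ∀ u, s < u → u ≤ t2 → M < g u := by
    intro u hsu hut2
    by_contra hgu
    push_neg at hgu
    have huS : u ∈ S := hSdef ▸ ⟨⟨le_trans hsS.1.1 hsu.le, hut2⟩, hgu⟩
    exact absurd (le_csSup hScomp.bddAbove huS) (not_le.2 hsu)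
  have hanti : AntitoneOn g (Set.Icc s t2) := by
    apply antitoneOn_of_deriv_nonpos (convex_Icc s t2)
    · intro u hu
      exact ((hdiff u (le_trans ht1T (le_trans hsS.1.1 hu.1))).continuousAt).continuousWithinAt
    · intro u hu
      rw [interior_Icc] at hu
      exact ((hdiff u (le_trans ht1T (le_trans hsS.1.1 hu.1.le))).differentiableWithinAt)
    · intro u hu
      rw [interior_Icc] at hu
      have := H u (le_trans ht1T (le_trans hsS.1.1 hu.1.le)) (hgt u hu.1 hu.2.le)
      linarith
  have := hanti (Set.left_mem_Icc.2 hs2.le) (Set.right_mem_Icc.2 hs2.le) hs2.le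
  have := hsS.2
  linarith

lemma eventually_ge_of_deriv_pos {g : ℝ → ℝ} {T M c : ℝ} (hc : 0 < c)
    (hdiff : ∀ t, T ≤ t → DifferentiableAt ℝ g t)
    (H : ∀ t, T ≤ t → g t < M → c ≤ deriv g t) :
    ∀ᶠ t in atTop, M ≤ g t := by
  have hdn : ∀ t, T ≤ t → DifferentiableAt ℝ (fun u => -g u) t := fun t ht => (hdiff t ht).neg
  have := eventually_le_of_deriv_neg (g := fun u => -g u) (M := -M) hc hdn ?_
  · filter_upwards [this] with t ht
    have ht' : -(g t) ≤ -M := ht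
    linarith
  · intro t ht hgt
    have hgt' : -M < -(g t) := hgt
    have h1 : g t < M := by linarith
    have h2 := H t ht h1
    rw [deriv.fun_neg]
    linarith

/-- Find a positive `ε` with two open conditions that hold at `0`. -/
lemma exists_pos_param {F G : ℝ → ℝ} (hFc : ContinuousAt F 0) (hGc : ContinuousAt G 0)
    (hF0 : 0 < F 0) (hG0 : 0 < G 0) : ∃ ε : ℝ, 0 < ε ∧ 0 < F ε ∧ 0 < G ε := by
  have h1 : ∀ᶠ u in 𝓝 (0:ℝ), 0 < F u := continuousAt_const.eventually_lt hFc hF0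
  have h2 : ∀ᶠ u in 𝓝 (0:ℝ), 0 < G u := continuousAt_const.eventually_lt hGc hG0
  have h3 := ((h1.and h2).filter_mono (nhdsWithin_le_nhds (s := Set.Ioi (0:ℝ)))).and
    (eventually_mem_nhdsWithin (a := (0:ℝ)) (s := Set.Ioi 0))
  obtain ⟨u, ⟨hu1, hu2⟩, hu3⟩ := h3.exists
  exact ⟨u, hu3, hu1, hu2⟩

section Masters
variable {g : ℝ → ℝ} {K T V W Vg : ℝ} {σ : ℝ → ℝ} {A P : ℝ → ℝ}

/-- Master upper bound lemma for delayed logistic-type inequalities. -/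
lemma master_upper (hK : 0 < K) (hT : 0 ≤ T)
    (hσ : ∀ t, 0 ≤ σ t ∧ σ t ≤ T)
    (hAc : ContinuousAt A 0) (hA0 : 0 < A 0)
    (hdiff : ∀ᶠ t in atTop, DifferentiableAt ℝ g t)
    (hd : ∀ ε, 0 < ε → ∀ᶠ t in atTop, deriv g t ≤ A ε - K * Real.exp (g (t - σ t)))
    (hV : V = Real.log (A 0 / K) + A 0 * T) :
    ∀ ε', 0 < ε' → ∀ᶠ t in atTop, g t ≤ V + ε' := by
  intro ε' hε'
  obtain ⟨ε, hεpos, hAε, hFε⟩ :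
      ∃ ε, 0 < ε ∧ 0 < A ε ∧ 0 < A 0 * Real.exp (ε' + (A 0 - A ε) * T) - A ε := by
    have hFc : ContinuousAt (fun u => A 0 * Real.exp (ε' + (A 0 - A u) * T) - A u) 0 :=
      (((Real.continuous_exp.continuousAt.comp
        (((continuousAt_const.sub hAc).mul continuousAt_const).const_add ε')).const_mul
          (A 0)).sub hAc)
    have hF0 : 0 < (fun u => A 0 * Real.exp (ε' + (A 0 - A u) * T) - A u) 0 := by
      simp only [sub_self, zero_mul, add_zero]
      have h1 : (1 : ℝ) < Real.exp ε' := by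
        rw [← Real.exp_zero]; exact Real.exp_lt_exp.2 hε'
      nlinarith
    obtain ⟨ε, h1, h2, h3⟩ := exists_pos_param hAc hFc hA0 hF0
    exact ⟨ε, h1, h2, h3⟩
  set c := A 0 * Real.exp (ε' + (A 0 - A ε) * T) - A ε with hcdef
  obtain ⟨T0, hT0⟩ := eventually_atTop.1 hdiff
  obtain ⟨T1, hT1⟩ := eventually_atTop.1 (hd ε hεpos)
  set T2 := max T0 T1 with hT2def
  have hdb : ∀ u, T2 ≤ u → deriv g u ≤ A ε := by
    intro u hu
    have := hT1 u (le_trans (le_max_right _ _) hu)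
    nlinarith [Real.exp_pos (g (u - σ u)), hK]
  have hdiff' : ∀ t, T2 + T ≤ t → DifferentiableAt ℝ g t := by
    intro t ht
    exact hT0 t (by linarith [le_max_left T0 T1])
  refine eventually_le_of_deriv_neg hFε hdiff' ?_
  intro t ht hgt
  have hσt := hσ t
  have hst : t - σ t ≤ t := by linarith [hσt.1]
  have hicc : ∀ u ∈ Set.Icc (t - σ t) t, T2 ≤ u := by
    intro u hu
    have h1 := hσt.2
    have h2 := hu.1
    have := le_max_left T0 T1
    have := le_max_right T0 T1
    linarith
  have hdel : g t - g (t - σ t) ≤ A ε * σ t := by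
    have := sub_le_of_deriv_le' hst
      (fun u hu => hT0 u (le_trans (le_max_left _ _) (hicc u hu)))
      (fun u hu => hdb u (hicc u hu))
    have heq : t - (t - σ t) = σ t := by ring
    rw [heq] at this
    exact this
  have hdel2 : g t - A ε * T ≤ g (t - σ t) := by
    have : A ε * σ t ≤ A ε * T := mul_le_mul_of_nonneg_left hσt.2 hAε.le
    linarith
  have hexp : K * Real.exp (V + ε' - A ε * T) ≤ K * Real.exp (g (t - σ t)) := by
    apply mul_le_mul_of_nonneg_left _ hK.le
    exact Real.exp_le_exp.2 (by linarith)
  have hcomp : K * Real.exp (V + ε' - A ε * T) = A 0 * Real.exp (ε' + (A 0 - A ε) * T) := by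
    rw [hV, show Real.log (A 0 / K) + A 0 * T + ε' - A ε * T
        = Real.log (A 0 / K) + (ε' + (A 0 - A ε) * T) by ring,
      Real.exp_add, Real.exp_log (div_pos hA0 hK)]
    field_simp
  have hder := hT1 t (le_trans (le_max_right T0 T1) (by linarith : T2 ≤ t))
  rw [hcomp] at hexp
  simp only [hcdef]
  linarith

/-- Master lower bound lemma for delayed logistic-type inequalities. -/
lemma master_lower (hK : 0 < K) (hT : 0 ≤ T)
    (hσ : ∀ t, 0 ≤ σ t ∧ σ t ≤ T)
    (hPc : ContinuousAt P 0) (hP0 : 0 < P 0)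
    (hdiff : ∀ᶠ t in atTop, DifferentiableAt ℝ g t)
    (hub : ∀ ε, 0 < ε → ∀ᶠ t in atTop, g (t - σ t) ≤ Vg + ε)
    (hd : ∀ ε, 0 < ε → ∀ᶠ t in atTop, P ε - K * Real.exp (g (t - σ t)) ≤ deriv g t)
    (hW : W = Real.log (P 0 / K) - K * Real.exp Vg * T) :
    ∀ ε', 0 < ε' → ∀ᶠ t in atTop, W - ε' ≤ g t := by
  intro ε' hε'
  obtain ⟨ε, hεpos, hPε, hFε⟩ :
      ∃ ε, 0 < ε ∧ 0 < P ε ∧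
        0 < P ε - P 0 * Real.exp (-ε' + K * Real.exp Vg * T * (Real.exp ε - 1)) := by
    have hFc : ContinuousAt
        (fun u => P u - P 0 * Real.exp (-ε' + K * Real.exp Vg * T * (Real.exp u - 1))) 0 :=
      hPc.sub ((Real.continuous_exp.continuousAt.comp
        (((Real.continuous_exp.continuousAt.sub continuousAt_const).const_mul
          (K * Real.exp Vg * T)).const_add (-ε'))).const_mul (P 0))
    have hF0 : 0 < (fun u =>
        P u - P 0 * Real.exp (-ε' + K * Real.exp Vg * T * (Real.exp u - 1))) 0 := by
      simp only [Real.exp_zero, sub_self, mul_zero, add_zero]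
      have h1 : Real.exp (-ε') < 1 := by
        rw [← Real.exp_zero]; exact Real.exp_lt_exp.2 (by linarith)
      nlinarith
    exact exists_pos_param hPc hFc hP0 hF0
  set c := P ε - P 0 * Real.exp (-ε' + K * Real.exp Vg * T * (Real.exp ε - 1)) with hcdef
  obtain ⟨T0, hT0⟩ := eventually_atTop.1 hdiff
  obtain ⟨T1, hT1⟩ := eventually_atTop.1 ((hd ε hεpos).and (hub ε hεpos))
  set T2 := max T0 T1 with hT2def
  set B := K * Real.exp (Vg + ε) with hBdef
  have hBpos : 0 < B := mul_pos hK (Real.exp_pos _)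
  -- lower derivative bound
  have hdb : ∀ u, T2 ≤ u → -B ≤ deriv g u := by
    intro u hu
    obtain ⟨h1, h2⟩ := hT1 u (le_trans (le_max_right _ _) hu)
    have h3 : K * Real.exp (g (u - σ u)) ≤ K * Real.exp (Vg + ε) :=
      mul_le_mul_of_nonneg_left (Real.exp_le_exp.2 h2) hK.le
    simp only [hBdef]
    linarith
  have hdiff' : ∀ t, T2 + T ≤ t → DifferentiableAt ℝ g t := by
    intro t ht
    exact hT0 t (by linarith [le_max_left T0 T1])
  refine eventually_ge_of_deriv_pos hFε hdiff' ?_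
  intro t ht hgt
  have hσt := hσ t
  have hst : t - σ t ≤ t := by linarith [hσt.1]
  have hicc : ∀ u ∈ Set.Icc (t - σ t) t, T2 ≤ u := by
    intro u hu
    have h1 := hσt.2
    have h2 := hu.1
    have := le_max_left T0 T1
    have := le_max_right T0 T1
    linarith
  -- delayed value upper bound via derivative lower bound, applied to -g
  have hdel : g (t - σ t) - g t ≤ B * σ t := by
    have := sub_le_of_deriv_le' (g := fun u => -g u) (B := B) hst
      (fun u hu => (hT0 u (le_trans (le_max_left _ _) (hicc u hu))).neg)
      (fun u hu => by
        rw [deriv.fun_neg]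
        have := hdb u (hicc u hu)
        linarith)
    have heq : t - (t - σ t) = σ t := by ring
    rw [heq] at this
    simp only [neg_sub_neg] at this
    linarith
  have hdel2 : g (t - σ t) ≤ g t + B * T := by
    have : B * σ t ≤ B * T := mul_le_mul_of_nonneg_left hσt.2 hBpos.le
    linarith
  have hexp : K * Real.exp (g (t - σ t)) ≤ K * Real.exp (W - ε' + B * T) :=
    mul_le_mul_of_nonneg_left (Real.exp_le_exp.2 (by linarith)) hK.le
  have hcomp : K * Real.exp (W - ε' + B * T)
      = P 0 * Real.exp (-ε' + K * Real.exp Vg * T * (Real.exp ε - 1)) := by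
    have h1 : W - ε' + B * T
        = Real.log (P 0 / K) + (-ε' + K * Real.exp Vg * T * (Real.exp ε - 1)) := by
      rw [hW, hBdef, Real.exp_add]; ring
    rw [h1, Real.exp_add, Real.exp_log (div_pos hP0 hK)]
    field_simp
  rw [hcomp] at hexp
  obtain ⟨hder, _⟩ := hT1 t (le_trans (le_max_right T0 T1) (by linarith : T2 ≤ t))
  simp only [hcdef]
  linarith
end Masters

lemma limsup_coe_le' {g : ℝ → ℝ} {V : ℝ} (h : ∀ ε, 0 < ε → ∀ᶠ t in atTop, g t ≤ V + ε) :
    Filter.limsup (fun t => ((g t : ℝ) : EReal)) Filter.atTop ≤ ((V:ℝ):EReal) := by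
  refine le_of_forall_gt_imp_ge_of_dense fun aa haa => ?_
  obtain ⟨z, hVz, hza⟩ := EReal.lt_iff_exists_real_btwn.1 haa
  have hz : 0 < z - V := sub_pos.2 (by exact_mod_cast hVz)
  refine le_trans (limsup_le_of_le (by isBoundedDefault) ?_) hza.le
  filter_upwards [h (z - V) hz] with t ht
  exact EReal.coe_le_coe_iff.2 (by linarith)

lemma le_liminf_coe' {g : ℝ → ℝ} {W : ℝ} (h : ∀ ε, 0 < ε → ∀ᶠ t in atTop, W - ε ≤ g t) :
    ((W:ℝ):EReal) ≤ Filter.liminf (fun t => ((g t : ℝ) : EReal)) Filter.atTop := by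
  refine le_of_forall_lt_imp_le_of_dense fun aa haa => ?_
  obtain ⟨z, hza, hzW⟩ := EReal.lt_iff_exists_real_btwn.1 haa
  have hz : 0 < W - z := sub_pos.2 (by exact_mod_cast hzW)
  refine le_trans hza.le (le_liminf_of_le (by isBoundedDefault) ?_)
  filter_upwards [h (W - z) hz] with t ht
  exact EReal.coe_le_coe_iff.2 (by linarith)


lemma eventually_delay' {p : ℝ → Prop} {σ : ℝ → ℝ} {S : ℝ} (hσ : ∀ t, σ t ≤ S)
    (h : ∀ᶠ t in Filter.atTop, p t) : ∀ᶠ t in Filter.atTop, p (t - σ t) := by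
  obtain ⟨T, hT⟩ := Filter.eventually_atTop.1 h
  exact Filter.eventually_atTop.2 ⟨T + S, fun t ht => hT _ (by have := hσ t; linarith)⟩

set_option maxHeartbeats 2000000 in
/-- Permanence of the multispecies Lotka–Volterra competition–predation system with
delays on `𝕋 = ℝ` without impulses, in logarithmic coordinates. -/
theorem lotka_volterra_permanence_real
    (n m : ℕ) (hn : 1 ≤ n) (hm : 1 ≤ m) (t0 : ℝ)
    (b : Fin n → ℝ → ℝ) (a : Fin n → Fin n → ℝ → ℝ) (c : Fin n → Fin m → ℝ → ℝ)
    (r : Fin m → ℝ → ℝ) (d : Fin m → Fin n → ℝ → ℝ) (e : Fin m → Fin m → ℝ → ℝ)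
    (τ : Fin n → Fin n → ℝ → ℝ) (δ : Fin n → Fin m → ℝ → ℝ)
    (ξ : Fin m → Fin n → ℝ → ℝ) (η : Fin m → Fin m → ℝ → ℝ)
    -- continuity of the coefficients and delays
    (hbc : ∀ i, Continuous (b i)) (hac : ∀ i l, Continuous (a i l))
    (hcc : ∀ i h, Continuous (c i h)) (hrc : ∀ j, Continuous (r j))
    (hdc : ∀ j l, Continuous (d j l)) (hec : ∀ j h, Continuous (e j h))
    (hτc : ∀ i l, Continuous (τ i l)) (hδc : ∀ i h, Continuous (δ i h))
    (hξc : ∀ j l, Continuous (ξ j l)) (hηc : ∀ j h, Continuous (η j h))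
    -- nonnegativity of the coefficients and delays
    (hbnn : ∀ i t, 0 ≤ b i t) (hann : ∀ i l t, 0 ≤ a i l t)
    (hcnn : ∀ i h t, 0 ≤ c i h t) (hrnn : ∀ j t, 0 ≤ r j t)
    (hdnn : ∀ j l t, 0 ≤ d j l t) (henn : ∀ j h t, 0 ≤ e j h t)
    (hτnn : ∀ i l t, 0 ≤ τ i l t) (hδnn : ∀ i h t, 0 ≤ δ i h t)
    (hξnn : ∀ j l t, 0 ≤ ξ j l t) (hηnn : ∀ j h t, 0 ≤ η j h t)
    -- suprema and infima of the coefficients (in particular boundedness)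
    (bU bL : Fin n → ℝ)
    (hbU : ∀ i, IsLUB (Set.range (b i)) (bU i))
    (hbL : ∀ i, IsGLB (Set.range (b i)) (bL i))
    (aU aL : Fin n → Fin n → ℝ)
    (haU : ∀ i l, IsLUB (Set.range (a i l)) (aU i l))
    (haL : ∀ i l, IsGLB (Set.range (a i l)) (aL i l))
    (cU : Fin n → Fin m → ℝ)
    (hcU : ∀ i h, IsLUB (Set.range (c i h)) (cU i h))
    (rU : Fin m → ℝ)
    (hrU : ∀ j, IsLUB (Set.range (r j)) (rU j))
    (dU dL : Fin m → Fin n → ℝ)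
    (hdU : ∀ j l, IsLUB (Set.range (d j l)) (dU j l))
    (hdL : ∀ j l, IsGLB (Set.range (d j l)) (dL j l))
    (eU eL : Fin m → Fin m → ℝ)
    (heU : ∀ j h, IsLUB (Set.range (e j h)) (eU j h))
    (heL : ∀ j h, IsGLB (Set.range (e j h)) (eL j h))
    -- boundedness of the delays; τ⁺ and η⁺
    (τp : ℝ)
    (hτp : IsLUB (Set.range fun p : (Fin n × Fin n) × ℝ => τ p.1.1 p.1.2 p.2) τp)
    (ηp : ℝ)
    (hηp : IsLUB (Set.range fun p : (Fin m × Fin m) × ℝ => η p.1.1 p.1.2 p.2) ηp)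
    (hδbdd : ∀ i h, BddAbove (Set.range (δ i h)))
    (hξbdd : ∀ j l, BddAbove (Set.range (ξ j l)))
    -- positivity assumptions
    (hbLpos : ∀ i, 0 < bL i) (haLpos : ∀ i, 0 < aL i i) (heLpos : ∀ j, 0 < eL j j)
    -- the permanence bounds
    (xV : Fin n → ℝ)
    (hxV : ∀ i, xV i = Real.log (bU i / aL i i) + bU i * τp)
    (D : Fin m → ℝ)
    (hD : ∀ j, D j = ∑ l, dU j l * Real.exp (xV l))
    (hDpos : ∀ j, 0 < D j)
    (yV : Fin m → ℝ)
    (hyV : ∀ j, yV j = Real.log (D j / eL j j) + D j * ηp)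
    (P : Fin n → ℝ)
    (hP : ∀ i, P i = bL i
      - (∑ l ∈ Finset.univ.filter (fun l => l ≠ i), aU i l * Real.exp (xV l))
      - ∑ h, cU i h * Real.exp (yV h))
    (hPpos : ∀ i, 0 < P i)
    (xW : Fin n → ℝ)
    (hxW : ∀ i, xW i = Real.log (P i / aU i i) - aU i i * Real.exp (xV i) * τp)
    (Q : Fin m → ℝ)
    (hQ : ∀ j, Q j = (∑ l, dL j l * Real.exp (xW l)) - rU j
      - ∑ h ∈ Finset.univ.filter (fun h => h ≠ j), eU j h * Real.exp (yV h))
    (hQpos : ∀ j, 0 < Q j)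
    (yW : Fin m → ℝ)
    (hyW : ∀ j, yW j = Real.log (Q j / eU j j) - eU j j * Real.exp (yV j) * ηp)
    -- a solution of the system on [t0, ∞)
    (x : Fin n → ℝ → ℝ) (y : Fin m → ℝ → ℝ)
    (hxdiff : ∀ i t, t0 ≤ t → DifferentiableAt ℝ (x i) t)
    (hydiff : ∀ j t, t0 ≤ t → DifferentiableAt ℝ (y j) t)
    (hxeq : ∀ i t, t0 ≤ t → deriv (x i) t =
      b i t - (∑ l, a i l t * Real.exp (x l (t - τ i l t)))
        - ∑ h, c i h t * Real.exp (y h (t - δ i h t)))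
    (hyeq : ∀ j t, t0 ≤ t → deriv (y j) t =
      -(r j t) + (∑ l, d j l t * Real.exp (x l (t - ξ j l t)))
        - ∑ h, e j h t * Real.exp (y h (t - η j h t))) :
    (∀ i, ((xW i : ℝ) : EReal) ≤ liminf (fun t => ((x i t : ℝ) : EReal)) atTop ∧
      liminf (fun t => ((x i t : ℝ) : EReal)) atTop ≤
        limsup (fun t => ((x i t : ℝ) : EReal)) atTop ∧
      limsup (fun t => ((x i t : ℝ) : EReal)) atTop ≤ ((xV i : ℝ) : EReal)) ∧
    (∀ j, ((yW j : ℝ) : EReal) ≤ liminf (fun t => ((y j t : ℝ) : EReal)) atTop ∧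
      liminf (fun t => ((y j t : ℝ) : EReal)) atTop ≤
        limsup (fun t => ((y j t : ℝ) : EReal)) atTop ∧
      limsup (fun t => ((y j t : ℝ) : EReal)) atTop ≤ ((yV j : ℝ) : EReal)) := by
    -- basic index elements
  have i0 : Fin n := ⟨0, hn⟩
  have j0 : Fin m := ⟨0, hm⟩
  -- pointwise coefficient bounds
  have hble : ∀ i t, b i t ≤ bU i := fun i t => (hbU i).1 ⟨t, rfl⟩
  have hbge : ∀ i t, bL i ≤ b i t := fun i t => (hbL i).1 ⟨t, rfl⟩
  have hale : ∀ i l t, a i l t ≤ aU i l := fun i l t => (haU i l).1 ⟨t, rfl⟩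
  have hage : ∀ i l t, aL i l ≤ a i l t := fun i l t => (haL i l).1 ⟨t, rfl⟩
  have hcle : ∀ i h t, c i h t ≤ cU i h := fun i h t => (hcU i h).1 ⟨t, rfl⟩
  have hrle : ∀ j t, r j t ≤ rU j := fun j t => (hrU j).1 ⟨t, rfl⟩
  have hdle : ∀ j l t, d j l t ≤ dU j l := fun j l t => (hdU j l).1 ⟨t, rfl⟩
  have hdge : ∀ j l t, dL j l ≤ d j l t := fun j l t => (hdL j l).1 ⟨t, rfl⟩
  have hele : ∀ j h t, e j h t ≤ eU j h := fun j h t => (heU j h).1 ⟨t, rfl⟩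
  have hege : ∀ j h t, eL j h ≤ e j h t := fun j h t => (heL j h).1 ⟨t, rfl⟩
  have hτle : ∀ i l t, τ i l t ≤ τp := fun i l t => hτp.1 ⟨((i, l), t), rfl⟩
  have hηle : ∀ j h t, η j h t ≤ ηp := fun j h t => hηp.1 ⟨((j, h), t), rfl⟩
  have hτp0 : 0 ≤ τp := le_trans (hτnn i0 i0 0) (hτle i0 i0 0)
  have hηp0 : 0 ≤ ηp := le_trans (hηnn j0 j0 0) (hηle j0 j0 0)
  have hbUpos : ∀ i, 0 < bU i := fun i => lt_of_lt_of_le (hbLpos i)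
    (le_trans (hbge i 0) (hble i 0))
  have haUpos : ∀ i, 0 < aU i i := fun i => lt_of_lt_of_le (haLpos i)
    (le_trans (hage i i 0) (hale i i 0))
  have heUpos : ∀ j, 0 < eU j j := fun j => lt_of_lt_of_le (heLpos j)
    (le_trans (hege j j 0) (hele j j 0))
  have haUnn : ∀ i l, 0 ≤ aU i l := fun i l => le_trans (hann i l 0) (hale i l 0)
  have hcUnn : ∀ i h, 0 ≤ cU i h := fun i h => le_trans (hcnn i h 0) (hcle i h 0)
  have hdUnn : ∀ j l, 0 ≤ dU j l := fun j l => le_trans (hdnn j l 0) (hdle j l 0)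
  have heUnn : ∀ j h, 0 ≤ eU j h := fun j h => le_trans (henn j h 0) (hele j h 0)
  have hdLnn : ∀ j l, 0 ≤ dL j l := fun j l =>
    (hdL j l).2 (by rintro v ⟨t, rfl⟩; exact hdnn j l t)
  have hxdiff' : ∀ i, ∀ᶠ t in atTop, DifferentiableAt ℝ (x i) t :=
    fun i => eventually_atTop.2 ⟨t0, hxdiff i⟩
  have hydiff' : ∀ j, ∀ᶠ t in atTop, DifferentiableAt ℝ (y j) t :=
    fun j => eventually_atTop.2 ⟨t0, hydiff j⟩
  -- Step 1: upper bounds for x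
  have hxU : ∀ i, ∀ ε, 0 < ε → ∀ᶠ t in atTop, x i t ≤ xV i + ε := by
    intro i
    refine master_upper (A := fun _ => bU i) (σ := fun t => τ i i t) (haLpos i) hτp0
      (fun t => ⟨hτnn i i t, hτle i i t⟩) continuousAt_const (hbUpos i) (hxdiff' i) ?_ (hxV i)
    intro ε hε
    refine eventually_atTop.2 ⟨t0, fun t ht => ?_⟩
    rw [hxeq i t ht]
    have hsum1 : a i i t * Real.exp (x i (t - τ i i t))
        ≤ ∑ l, a i l t * Real.exp (x l (t - τ i l t)) :=
      Finset.single_le_sum (f := fun l => a i l t * Real.exp (x l (t - τ i l t)))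
        (fun l _ => mul_nonneg (hann i l t) (Real.exp_pos _).le) (Finset.mem_univ i)
    have hsum2 : 0 ≤ ∑ h, c i h t * Real.exp (y h (t - δ i h t)) :=
      Finset.sum_nonneg fun h _ => mul_nonneg (hcnn i h t) (Real.exp_pos _).le
    have h3 : aL i i * Real.exp (x i (t - τ i i t))
        ≤ a i i t * Real.exp (x i (t - τ i i t)) :=
      mul_le_mul_of_nonneg_right (hage i i t) (Real.exp_pos _).le
    have h4 := hble i t
    linarith
  -- Step 2: upper bounds for y
  have hyU : ∀ j, ∀ ε, 0 < ε → ∀ᶠ t in atTop, y j t ≤ yV j + ε := by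
    intro j
    refine master_upper (A := fun ε => D j * Real.exp ε) (σ := fun t => η j j t) (heLpos j)
      hηp0 (fun t => ⟨hηnn j j t, hηle j j t⟩) (by fun_prop)
      (by simpa using hDpos j) (hydiff' j) ?_ (by rw [hyV j]; simp [Real.exp_zero])
    intro ε hε
    have hev : ∀ᶠ t in atTop, ∀ l, x l (t - ξ j l t) ≤ xV l + ε :=
      eventually_all.2 (fun l => by
        obtain ⟨S, hS⟩ := hξbdd j l
        exact eventually_delay' (fun t => hS ⟨t, rfl⟩) (hxU l ε hε))
    filter_upwards [hev, eventually_ge_atTop t0] with t hxl ht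
    rw [hyeq j t ht]
    have hsum1 : ∑ l, d j l t * Real.exp (x l (t - ξ j l t)) ≤ D j * Real.exp ε := by
      rw [hD j, Finset.sum_mul]
      refine Finset.sum_le_sum (fun l _ => ?_)
      have h1 : Real.exp (x l (t - ξ j l t)) ≤ Real.exp (xV l) * Real.exp ε := by
        rw [← Real.exp_add]; exact Real.exp_le_exp.2 (by linarith [hxl l])
      calc d j l t * Real.exp (x l (t - ξ j l t))
          ≤ dU j l * Real.exp (x l (t - ξ j l t)) :=
            mul_le_mul_of_nonneg_right (hdle j l t) (Real.exp_pos _).le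
        _ ≤ dU j l * (Real.exp (xV l) * Real.exp ε) :=
            mul_le_mul_of_nonneg_left h1 (hdUnn j l)
        _ = dU j l * Real.exp (xV l) * Real.exp ε := by ring
    have hsum2 : eL j j * Real.exp (y j (t - η j j t))
        ≤ ∑ h, e j h t * Real.exp (y h (t - η j h t)) :=
      le_trans (mul_le_mul_of_nonneg_right (hege j j t) (Real.exp_pos _).le)
        (Finset.single_le_sum (f := fun h => e j h t * Real.exp (y h (t - η j h t)))
          (fun h _ => mul_nonneg (henn j h t) (Real.exp_pos _).le) (Finset.mem_univ j))
    have hr := hrnn j t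
    linarith
  -- Step 3: lower bounds for x
  have hxL : ∀ i, ∀ ε, 0 < ε → ∀ᶠ t in atTop, xW i - ε ≤ x i t := by
    intro i
    refine master_lower (Vg := xV i) (σ := fun t => τ i i t)
      (P := fun ε => bL i
        - Real.exp ε * (∑ l ∈ Finset.univ.filter (fun l => l ≠ i), aU i l * Real.exp (xV l))
        - Real.exp ε * ∑ h, cU i h * Real.exp (yV h))
      (haUpos i) hτp0 (fun t => ⟨hτnn i i t, hτle i i t⟩) (by fun_prop)
      (by simpa only [Real.exp_zero, one_mul] using (hP i ▸ hPpos i)) (hxdiff' i)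
      (fun ε hε => eventually_delay' (fun t => hτle i i t) (hxU i ε hε)) ?_
      (by rw [hxW i, hP i]; simp [Real.exp_zero])
    intro ε hε
    have hev1 : ∀ᶠ t in atTop, ∀ l, x l (t - τ i l t) ≤ xV l + ε :=
      eventually_all.2 (fun l => eventually_delay' (fun t => hτle i l t) (hxU l ε hε))
    have hev2 : ∀ᶠ t in atTop, ∀ h, y h (t - δ i h t) ≤ yV h + ε :=
      eventually_all.2 (fun h => by
        obtain ⟨S, hS⟩ := hδbdd i h
        exact eventually_delay' (fun t => hS ⟨t, rfl⟩) (hyU h ε hε))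
    filter_upwards [hev1, hev2, eventually_ge_atTop t0] with t hxl hyh ht
    rw [hxeq i t ht]
    have hsplit : ∑ l, a i l t * Real.exp (x l (t - τ i l t))
        = a i i t * Real.exp (x i (t - τ i i t))
          + ∑ l ∈ Finset.univ.filter (fun l => l ≠ i), a i l t * Real.exp (x l (t - τ i l t)) := by
      rw [Finset.filter_ne']
      exact (Finset.add_sum_erase Finset.univ
        (fun l => a i l t * Real.exp (x l (t - τ i l t))) (Finset.mem_univ i)).symm
    have hS1 : ∑ l ∈ Finset.univ.filter (fun l => l ≠ i), a i l t * Real.exp (x l (t - τ i l t))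
        ≤ Real.exp ε * ∑ l ∈ Finset.univ.filter (fun l => l ≠ i), aU i l * Real.exp (xV l) := by
      rw [Finset.mul_sum]
      refine Finset.sum_le_sum (fun l _ => ?_)
      have h1 : Real.exp (x l (t - τ i l t)) ≤ Real.exp (xV l) * Real.exp ε := by
        rw [← Real.exp_add]; exact Real.exp_le_exp.2 (by linarith [hxl l])
      calc a i l t * Real.exp (x l (t - τ i l t))
          ≤ aU i l * Real.exp (x l (t - τ i l t)) :=
            mul_le_mul_of_nonneg_right (hale i l t) (Real.exp_pos _).le
        _ ≤ aU i l * (Real.exp (xV l) * Real.exp ε) :=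
            mul_le_mul_of_nonneg_left h1 (haUnn i l)
        _ = Real.exp ε * (aU i l * Real.exp (xV l)) := by ring
    have hS2 : ∑ h, c i h t * Real.exp (y h (t - δ i h t))
        ≤ Real.exp ε * ∑ h, cU i h * Real.exp (yV h) := by
      rw [Finset.mul_sum]
      refine Finset.sum_le_sum (fun h _ => ?_)
      have h1 : Real.exp (y h (t - δ i h t)) ≤ Real.exp (yV h) * Real.exp ε := by
        rw [← Real.exp_add]; exact Real.exp_le_exp.2 (by linarith [hyh h])
      calc c i h t * Real.exp (y h (t - δ i h t))
          ≤ cU i h * Real.exp (y h (t - δ i h t)) :=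
            mul_le_mul_of_nonneg_right (hcle i h t) (Real.exp_pos _).le
        _ ≤ cU i h * (Real.exp (yV h) * Real.exp ε) :=
            mul_le_mul_of_nonneg_left h1 (hcUnn i h)
        _ = Real.exp ε * (cU i h * Real.exp (yV h)) := by ring
    have hEi : a i i t * Real.exp (x i (t - τ i i t))
        ≤ aU i i * Real.exp (x i (t - τ i i t)) :=
      mul_le_mul_of_nonneg_right (hale i i t) (Real.exp_pos _).le
    have h4 := hbge i t
    rw [hsplit]
    linarith
  -- Step 4: lower bounds for y
  have hyL : ∀ j, ∀ ε, 0 < ε → ∀ᶠ t in atTop, yW j - ε ≤ y j t := by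
    intro j
    refine master_lower (Vg := yV j) (σ := fun t => η j j t)
      (P := fun ε => Real.exp (-ε) * (∑ l, dL j l * Real.exp (xW l)) - rU j
        - Real.exp ε * ∑ h ∈ Finset.univ.filter (fun h => h ≠ j), eU j h * Real.exp (yV h))
      (heUpos j) hηp0 (fun t => ⟨hηnn j j t, hηle j j t⟩) (by fun_prop)
      (by simpa only [neg_zero, Real.exp_zero, one_mul] using (hQ j ▸ hQpos j)) (hydiff' j)
      (fun ε hε => eventually_delay' (fun t => hηle j j t) (hyU j ε hε)) ?_
      (by rw [hyW j, hQ j]; simp [Real.exp_zero])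
    intro ε hε
    have hev1 : ∀ᶠ t in atTop, ∀ l, xW l - ε ≤ x l (t - ξ j l t) :=
      eventually_all.2 (fun l => by
        obtain ⟨S, hS⟩ := hξbdd j l
        exact eventually_delay' (fun t => hS ⟨t, rfl⟩) (hxL l ε hε))
    have hev2 : ∀ᶠ t in atTop, ∀ h, y h (t - η j h t) ≤ yV h + ε :=
      eventually_all.2 (fun h => eventually_delay' (fun t => hηle j h t) (hyU h ε hε))
    filter_upwards [hev1, hev2, eventually_ge_atTop t0] with t hxl hyh ht
    rw [hyeq j t ht]
    have hsplit : ∑ h, e j h t * Real.exp (y h (t - η j h t))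
        = e j j t * Real.exp (y j (t - η j j t))
          + ∑ h ∈ Finset.univ.filter (fun h => h ≠ j), e j h t * Real.exp (y h (t - η j h t)) := by
      rw [Finset.filter_ne']
      exact (Finset.add_sum_erase Finset.univ
        (fun h => e j h t * Real.exp (y h (t - η j h t))) (Finset.mem_univ j)).symm
    have hS3 : Real.exp (-ε) * ∑ l, dL j l * Real.exp (xW l)
        ≤ ∑ l, d j l t * Real.exp (x l (t - ξ j l t)) := by
      rw [Finset.mul_sum]
      refine Finset.sum_le_sum (fun l _ => ?_)
      have h1 : Real.exp (xW l) * Real.exp (-ε) ≤ Real.exp (x l (t - ξ j l t)) := by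
        rw [← Real.exp_add]; exact Real.exp_le_exp.2 (by linarith [hxl l])
      calc Real.exp (-ε) * (dL j l * Real.exp (xW l))
          = dL j l * (Real.exp (xW l) * Real.exp (-ε)) := by ring
        _ ≤ dL j l * Real.exp (x l (t - ξ j l t)) :=
            mul_le_mul_of_nonneg_left h1 (hdLnn j l)
        _ ≤ d j l t * Real.exp (x l (t - ξ j l t)) :=
            mul_le_mul_of_nonneg_right (hdge j l t) (Real.exp_pos _).le
    have hS4 : ∑ h ∈ Finset.univ.filter (fun h => h ≠ j), e j h t * Real.exp (y h (t - η j h t))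
        ≤ Real.exp ε * ∑ h ∈ Finset.univ.filter (fun h => h ≠ j), eU j h * Real.exp (yV h) := by
      rw [Finset.mul_sum]
      refine Finset.sum_le_sum (fun h _ => ?_)
      have h1 : Real.exp (y h (t - η j h t)) ≤ Real.exp (yV h) * Real.exp ε := by
        rw [← Real.exp_add]; exact Real.exp_le_exp.2 (by linarith [hyh h])
      calc e j h t * Real.exp (y h (t - η j h t))
          ≤ eU j h * Real.exp (y h (t - η j h t)) :=
            mul_le_mul_of_nonneg_right (hele j h t) (Real.exp_pos _).le
        _ ≤ eU j h * (Real.exp (yV h) * Real.exp ε) :=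
            mul_le_mul_of_nonneg_left h1 (heUnn j h)
        _ = Real.exp ε * (eU j h * Real.exp (yV h)) := by ring
    have hEj : e j j t * Real.exp (y j (t - η j j t))
        ≤ eU j j * Real.exp (y j (t - η j j t)) :=
      mul_le_mul_of_nonneg_right (hele j j t) (Real.exp_pos _).le
    have h4 := hrle j t
    rw [hsplit]
    linarith
  -- conclusion
  constructor
  · intro i
    refine ⟨le_liminf_coe' (hxL i), liminf_le_limsup, limsup_coe_le' (hxU i)⟩
  · intro j
    refine ⟨le_liminf_coe' (hyL j), liminf_le_limsup, limsup_coe_le' (hyU j)⟩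
end

section
/- Fix n, m ≥ 1 and t0 ∈ ℤ. For i, l ∈ {1,…,n} and j, h ∈ {1,…,m}, let b_i, a_{il}, c_{ih}, r_j, d_{jl}, e_{jh} : ℤ → ℝ be nonnegative bounded functions, and let τ_{il}, δ_{ih}, ξ_{jl}, η_{jh} : ℤ → ℕ be bounded delay functions. Write f^U = sup_{t∈ℤ} f(t), f^L = inf_{t∈ℤ} f(t), τ⁺ = max_{i,l} sup τ_{il}, and η⁺ = max_{j,h} sup η_{jh}. Assume b_i^L > 0, a_{ii}^L > 0, e_{jj}^L > 0 and b_i^U < 1 for all i, j. Define x_i^∨ = ln(b_i^U/a_{ii}^L) + b_i^U·τ⁺/(1 − b_i^U); D_j = Σ_{l=1}^n d_{jl}^U·e^{x_l^∨} and y_j^∨ = ln(D_j/e_{jj}^L) + D_j·η⁺/(1 − D_j), assuming 0 < D_j < 1; P_i = b_i^L − Σ_{l≠i} a_{il}^U·e^{x_l^∨} − Σ_{h=1}^m c_{ih}^U·e^{y_h^∨} and x_i^∧ = ln(P_i/a_{ii}^U) + τ⁺·ln(1 − a_{ii}^U·e^{x_i^∨}), assuming P_i > 0 and 1 − a_{ii}^U·e^{x_i^∨}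 > 0; Q_j = Σ_{l=1}^n d_{jl}^L·e^{x_l^∧} − r_j^U − Σ_{h≠j} e_{jh}^U·e^{y_h^∨} and y_j^∧ = ln(Q_j/e_{jj}^U) + η⁺·ln(1 − e_{jj}^U·e^{y_j^∨}), assuming Q_j > 0 and 1 − e_{jj}^U·e^{y_j^∨} > 0. Let x_1,…,x_n, y_1,…,y_m : ℤ → ℝ satisfy, for all t ≥ t0, x_i(t+1) = x_i(t) + b_i(t) − Σ_{l=1}^n a_{il}(t)·exp(x_l(t − τ_{il}(t))) − Σ_{h=1}^m c_{ih}(t)·exp(y_h(t − δ_{ih}(t))) and y_j(t+1) = y_j(t) − r_j(t) + Σ_{l=1}^n d_{jl}(t)·exp(x_l(t − ξ_{jl}(t))) − Σ_{h=1}^m e_{jh}(t)·exp(y_h(t − η_{jh}(t))). Then for every i and j: x_i^∧ ≤ liminf_{t→∞} x_i(t) ≤ limsup_{t→∞} x_i(t) ≤ x_i^∨ and y_j^∧ ≤ liminf_{t→∞} y_j(t) ≤ limsup_{t→∞} y_j(t) ≤ y_j^∨. In particular the discrete system is permanent. -/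
open Filter


private lemma EReal_le_of_forall_real_gt (a : EReal) (c : ℝ)
    (h : ∀ z : ℝ, c < z → a ≤ (z : EReal)) : a ≤ (c : EReal) := by
  by_contra hc
  push_neg at hc
  obtain ⟨z, hz1, hz2⟩ := EReal.exists_between_coe_real hc
  exact absurd (h z (by exact_mod_cast hz1)) (not_le.mpr hz2)

private lemma EReal_ge_of_forall_real_lt (a : EReal) (c : ℝ)
    (h : ∀ z : ℝ, z < c → (z : EReal) ≤ a) : (c : EReal) ≤ a := by
  by_contra hc
  push_neg at hc
  obtain ⟨z, hz1, hz2⟩ := EReal.exists_between_coe_real hc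
  exact absurd (h z (by exact_mod_cast hz2)) (not_le.mpr hz1)

private lemma ev_le_of_limsup_le {u : ℤ → ℝ} {c z : ℝ} (hcz : c < z)
    (h : Filter.limsup (fun t : ℤ => ((u t : ℝ) : EReal)) Filter.atTop ≤ (c : EReal)) :
    ∀ᶠ t in (Filter.atTop : Filter ℤ), u t ≤ z := by
  have h2 : Filter.limsup (fun t : ℤ => ((u t : ℝ) : EReal)) Filter.atTop < (z : EReal) :=
    lt_of_le_of_lt h (by exact_mod_cast hcz)
  exact (Filter.eventually_lt_of_limsup_lt h2).mono fun t ht => (EReal.coe_lt_coe_iff.mp ht).le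

private lemma ev_ge_of_le_liminf {u : ℤ → ℝ} {c z : ℝ} (hcz : z < c)
    (h : (c : EReal) ≤ Filter.liminf (fun t : ℤ => ((u t : ℝ) : EReal)) Filter.atTop) :
    ∀ᶠ t in (Filter.atTop : Filter ℤ), z ≤ u t := by
  have h2 : (z : EReal) < Filter.liminf (fun t : ℤ => ((u t : ℝ) : EReal)) Filter.atTop :=
    lt_of_lt_of_le (by exact_mod_cast hcz) h
  exact (Filter.eventually_lt_of_lt_liminf h2).mono fun t ht => (EReal.coe_lt_coe_iff.mp ht).le

private lemma exists_pos_of_eventually_nhds {p : ℝ → Prop} (h : ∀ᶠ s in nhds (0:ℝ), p s) :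
    ∃ s : ℝ, 0 < s ∧ p s := by
  have h2 : ∀ᶠ s in nhdsWithin (0:ℝ) (Set.Ioi 0), p s := h.filter_mono nhdsWithin_le_nhds
  obtain ⟨s, hs, hp⟩ := (eventually_mem_nhdsWithin.and h2).exists
  exact ⟨s, hs, hp⟩

private lemma core_upper (u : ℤ → ℝ) (B A : ℝ) (τp : ℕ) (T : ℤ)
    (hB0 : 0 < B) (hB1 : B < 1) (hA : 0 < A)
    (heq : ∀ t : ℤ, T ≤ t → ∃ k : ℕ, k ≤ τp ∧
      u (t + 1) ≤ u t + B - A * Real.exp (u (t - (k : ℤ)))) :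
    Filter.limsup (fun t : ℤ => ((u t : ℝ) : EReal)) Filter.atTop ≤
      ((Real.log (B / A) + B * (τp : ℝ) / (1 - B) : ℝ) : EReal) := by
  set K := Real.log (B / A) with hKdef
  set M := K + B * (τp : ℝ) / (1 - B) with hMdef
  have h1B : 0 < 1 - B := by linarith
  have hexpK : A * Real.exp K = B := by
    rw [hKdef, Real.exp_log (div_pos hB0 hA)]
    field_simp
  have hKM : K ≤ M := by
    rw [hMdef]
    have : 0 ≤ B * (τp:ℝ) / (1 - B) := by positivity
    linarith
  have hτ0 : (0:ℤ) ≤ (τp:ℤ) := Int.ofNat_nonneg τp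
  have hstep : ∀ t : ℤ, T ≤ t → u (t+1) ≤ u t + B := by
    intro t ht
    obtain ⟨k, _, hk⟩ := heq t ht
    have : 0 ≤ A * Real.exp (u (t - (k:ℤ))) := by positivity
    linarith
  have hwin : ∀ k : ℕ, ∀ t : ℤ, T + (k:ℤ) ≤ t → u t ≤ u (t - (k:ℤ)) + (k:ℝ) * B := by
    intro k
    induction k with
    | zero => intro t _; simp
    | succ k ih =>
      intro t ht
      have hk1 : ((k:ℤ)+1 : ℤ) = ((k+1 : ℕ) : ℤ) := by push_cast; ring
      have ht1 : T + (k:ℤ) ≤ t - 1 := by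
        have : T + ((k:ℤ)+1) ≤ t := by rw [hk1]; exact ht
        linarith
      have h2 := ih (t-1) ht1
      have h3 : u t ≤ u (t-1) + B := by
        have := hstep (t-1) (by linarith)
        simpa using this
      have harg : t - 1 - (k:ℤ) = t - ((k+1 : ℕ) : ℤ) := by push_cast; ring
      rw [harg] at h2
      push_cast at h2 ⊢
      linarith
  have hrise : ∀ t : ℤ, T + (τp:ℤ) ≤ t → u t < u (t+1) → u (t+1) ≤ M := by
    intro t ht hr
    obtain ⟨k, hkτ, hk⟩ := heq t (by linarith)
    set w := u (t - (k:ℤ)) with hwdef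
    have hkZ : (k:ℤ) ≤ (τp:ℤ) := by exact_mod_cast hkτ
    have hwK : w ≤ K := by
      have h1 : A * Real.exp w < B := by linarith
      have h2 : Real.exp w < Real.exp K := by
        have : A * Real.exp K = B := hexpK
        nlinarith [Real.exp_pos w, Real.exp_pos K]
      exact (Real.exp_lt_exp.mp h2).le
    have hwin' : u t ≤ w + (k:ℝ) * B := hwin k t (by linarith)
    have hBe : B + B * (w - K) ≤ A * Real.exp w := by
      have h1 := Real.add_one_le_exp (w - K)
      have hEK : Real.exp K = B / A := by
        rw [hKdef]; exact Real.exp_log (div_pos hB0 hA)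
      have h2 : A * Real.exp w = B * Real.exp (w - K) := by
        rw [Real.exp_sub, hEK]
        field_simp
      rw [h2]
      nlinarith
    have hkB : (k:ℝ) * B ≤ (τp:ℝ) * B := by
      have : (k:ℝ) ≤ (τp:ℝ) := by exact_mod_cast hkτ
      nlinarith
    have hdiv : B * (τp:ℝ) ≤ B * (τp:ℝ) / (1 - B) := by
      rw [le_div_iff₀ h1B]
      have h0 : 0 ≤ B * (τp:ℝ) := by positivity
      nlinarith
    have hprod : (1 - B) * w ≤ (1 - B) * K := mul_le_mul_of_nonneg_left hwK h1B.le
    have hfin : u (t+1) ≤ K + (τp:ℝ) * B := by linarith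
    rw [hMdef]
    linarith
  have hinv : ∀ t1 : ℤ, T + (τp:ℤ) ≤ t1 → u t1 ≤ M → ∀ t, t1 ≤ t → u t ≤ M := by
    intro t1 ht1 hu1 t
    refine Int.le_induction (motive := fun t _ => u t ≤ M) hu1 (fun s hs hus => ?_) t
    by_cases hr : u (s+1) ≤ u s
    · linarith
    · exact hrise s (le_trans ht1 hs) (not_le.mp hr)
  apply EReal_le_of_forall_real_gt
  intro z hz
  have hev : ∀ᶠ t in (atTop : Filter ℤ), u t ≤ z := by
    by_cases hex : ∃ t1, T + (τp:ℤ) ≤ t1 ∧ u t1 ≤ M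
    · obtain ⟨t1, ht1, hu1⟩ := hex
      filter_upwards [eventually_ge_atTop t1] with t ht
      exact le_trans (hinv t1 ht1 hu1 t ht) hz.le
    · push_neg at hex
      have hdec : ∀ t, T + (τp:ℤ) ≤ t → u (t+1) ≤ u t := by
        intro t ht
        by_contra hr
        exact absurd (hrise t ht (not_le.mp hr)) (not_le.mpr (hex (t+1) (by linarith)))
      by_cases hex2 : ∃ t2, T + (τp:ℤ) ≤ t2 ∧ u t2 ≤ z
      · obtain ⟨t2, ht2, hu2⟩ := hex2
        filter_upwards [eventually_ge_atTop t2] with t ht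
        refine Int.le_induction (motive := fun t _ => u t ≤ z) hu2 (fun s hs hus => ?_) t ht
        exact le_trans (hdec s (le_trans ht2 hs)) hus
      · push_neg at hex2
        exfalso
        have hKz : K < z := lt_of_le_of_lt hKM hz
        have hc0 : 0 < A * Real.exp z - B := by
          have h2 : Real.exp K < Real.exp z := Real.exp_lt_exp.mpr hKz
          nlinarith
        set c0 := A * Real.exp z - B with hc0def
        set T2 := T + (τp:ℤ) + (τp:ℤ) with hT2
        have hdrop : ∀ t, T2 ≤ t → u (t+1) ≤ u t - c0 := by
          intro t ht
          obtain ⟨k, hkτ, hk⟩ := heq t (by rw [hT2] at ht; linarith)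
          have hkZ : (k:ℤ) ≤ (τp:ℤ) := by exact_mod_cast hkτ
          have harg : T + (τp:ℤ) ≤ t - (k:ℤ) := by rw [hT2] at ht; linarith
          have h2 : z < u (t - (k:ℤ)) := hex2 _ harg
          have h3 : A * Real.exp z ≤ A * Real.exp (u (t-(k:ℤ))) :=
            mul_le_mul_of_nonneg_left (Real.exp_le_exp.mpr h2.le) hA.le
          rw [hc0def]; linarith
        have hiter : ∀ N : ℕ, u (T2 + (N:ℤ)) ≤ u T2 - (N:ℝ) * c0 := by
          intro N
          induction N with
          | zero => simp
          | succ N ih =>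
            have h1 := hdrop (T2 + (N:ℤ)) (by linarith [Int.ofNat_nonneg N])
            have harg : T2 + (N:ℤ) + 1 = T2 + ((N+1 : ℕ) : ℤ) := by push_cast; ring
            rw [harg] at h1
            push_cast at ih h1 ⊢
            linarith
        obtain ⟨N, hN⟩ := exists_nat_gt ((u T2 - z) / c0)
        have hN2 : u T2 - z < (N:ℝ) * c0 := by
          rw [div_lt_iff₀ hc0] at hN; linarith
        have h4 := hiter N
        have h5 := hex2 (T2 + (N:ℤ)) (by rw [hT2]; linarith [Int.ofNat_nonneg N])
        linarith
  exact Filter.limsup_le_of_le (by isBoundedDefault)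
    (hev.mono fun t ht => EReal.coe_le_coe_iff.mpr ht)

private lemma core_lower (u : ℤ → ℝ) (P A X : ℝ) (τp : ℕ) (T : ℤ)
    (hP : 0 < P) (hA : 0 < A) (hAX : A * Real.exp X < 1)
    (hub : ∀ t : ℤ, T ≤ t → u t ≤ X)
    (heq : ∀ t : ℤ, T ≤ t → ∃ k : ℕ, k ≤ τp ∧
      u t + P - A * Real.exp (u (t - (k : ℤ))) ≤ u (t + 1)) :
    ((Real.log (P / A) + (τp : ℝ) * Real.log (1 - A * Real.exp X) : ℝ) : EReal) ≤
      Filter.liminf (fun t : ℤ => ((u t : ℝ) : EReal)) Filter.atTop := by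
  set K := Real.log (P / A) with hKdef
  set G := Real.log (1 - A * Real.exp X) with hGdef
  set L := K + (τp : ℝ) * G with hLdef
  have hAXpos : 0 < 1 - A * Real.exp X := by linarith
  have hEK : Real.exp K = P / A := by rw [hKdef]; exact Real.exp_log (div_pos hP hA)
  have hexpK : A * Real.exp K = P := by rw [hEK]; field_simp
  have hG0 : G ≤ 0 := by
    rw [hGdef]
    apply Real.log_nonpos (by linarith)
    nlinarith [Real.exp_pos X]
  have hGle : G ≤ -(A * Real.exp X) := by
    rw [hGdef]
    have h1 := Real.add_one_le_exp (-(A * Real.exp X))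
    have h2 : 1 - A * Real.exp X ≤ Real.exp (-(A * Real.exp X)) := by linarith
    calc Real.log (1 - A * Real.exp X) ≤ Real.log (Real.exp (-(A * Real.exp X))) :=
          Real.log_le_log hAXpos h2
      _ = -(A * Real.exp X) := Real.log_exp _
  have hLK : L ≤ K := by
    rw [hLdef]
    have : (τp:ℝ) * G ≤ 0 := mul_nonpos_of_nonneg_of_nonpos (Nat.cast_nonneg τp) hG0
    linarith
  have hτ0 : (0:ℤ) ≤ (τp:ℤ) := Int.ofNat_nonneg τp
  -- per-step drop bound
  have hstep : ∀ t : ℤ, T + (τp:ℤ) ≤ t → u t + G ≤ u (t+1) := by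
    intro t ht
    obtain ⟨k, hkτ, hk⟩ := heq t (by linarith)
    have hkZ : (k:ℤ) ≤ (τp:ℤ) := by exact_mod_cast hkτ
    have hwX : u (t - (k:ℤ)) ≤ X := hub _ (by linarith)
    have h3 : A * Real.exp (u (t - (k:ℤ))) ≤ A * Real.exp X :=
      mul_le_mul_of_nonneg_left (Real.exp_le_exp.mpr hwX) hA.le
    linarith
  have hwin : ∀ k : ℕ, ∀ t : ℤ, T + (τp:ℤ) + (k:ℤ) ≤ t → u (t - (k:ℤ)) + (k:ℝ) * G ≤ u t := by
    intro k
    induction k with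
    | zero => intro t _; simp
    | succ k ih =>
      intro t ht
      have hk1 : ((k:ℤ)+1 : ℤ) = ((k+1 : ℕ) : ℤ) := by push_cast; ring
      have ht1 : T + (τp:ℤ) + (k:ℤ) ≤ t - 1 := by
        have : T + (τp:ℤ) + ((k:ℤ)+1) ≤ t := by rw [hk1]; exact ht
        linarith
      have h2 := ih (t-1) ht1
      have h3 : u (t-1) + G ≤ u t := by
        have := hstep (t-1) (by linarith)
        simpa using this
      have harg : t - 1 - (k:ℤ) = t - ((k+1 : ℕ) : ℤ) := by push_cast; ring
      rw [harg] at h2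
      push_cast at h2 ⊢
      linarith
  -- fall bound
  have hfall : ∀ t : ℤ, T + (τp:ℤ) + (τp:ℤ) ≤ t → u (t+1) < u t → L ≤ u (t+1) := by
    intro t ht hr
    obtain ⟨k, hkτ, hk⟩ := heq t (by linarith)
    set w := u (t - (k:ℤ)) with hwdef
    have hkZ : (k:ℤ) ≤ (τp:ℤ) := by exact_mod_cast hkτ
    have hwX : w ≤ X := hub _ (by linarith)
    have hKw : K ≤ w := by
      have h1 : P < A * Real.exp w := by linarith
      have h2 : Real.exp K < Real.exp w := by nlinarith [Real.exp_pos w, Real.exp_pos K]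
      exact (Real.exp_lt_exp.mp h2).le
    have hwin' : w + (k:ℝ) * G ≤ u t := hwin k t (by linarith)
    -- exp w - exp K ≤ exp X * (w - K)
    have hmvt : Real.exp w - Real.exp K ≤ Real.exp X * (w - K) := by
      have h1 := Real.add_one_le_exp (K - w)
      have h2 : Real.exp w * ((K - w) + 1) ≤ Real.exp w * Real.exp (K - w) :=
        mul_le_mul_of_nonneg_left h1 (Real.exp_nonneg w)
      rw [← Real.exp_add] at h2
      have h3 : w + (K - w) = K := by ring
      rw [h3] at h2
      have h4 : Real.exp w ≤ Real.exp X := Real.exp_le_exp.mpr hwX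
      nlinarith [sub_nonneg.mpr hKw]
    have hAew : A * Real.exp w ≤ P + A * Real.exp X * (w - K) := by
      have := mul_le_mul_of_nonneg_left hmvt hA.le
      nlinarith
    have hkG : (τp:ℝ) * G ≤ (k:ℝ) * G := by
      have hkk : (k:ℝ) ≤ (τp:ℝ) := by exact_mod_cast hkτ
      exact mul_le_mul_of_nonpos_right hkk hG0
    have hprod : 0 ≤ (w - K) * (1 - A * Real.exp X) :=
      mul_nonneg (by linarith) hAXpos.le
    rw [hLdef]
    nlinarith
  have hinv : ∀ t1 : ℤ, T + (τp:ℤ) + (τp:ℤ) ≤ t1 → L ≤ u t1 → ∀ t, t1 ≤ t → L ≤ u t := by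
    intro t1 ht1 hu1 t
    refine Int.le_induction (motive := fun t _ => L ≤ u t) hu1 (fun s hs hus => ?_) t
    by_cases hr : u s ≤ u (s+1)
    · linarith
    · exact hfall s (le_trans ht1 hs) (not_le.mp hr)
  apply EReal_ge_of_forall_real_lt
  intro z hz
  have hev : ∀ᶠ t in (atTop : Filter ℤ), z ≤ u t := by
    by_cases hex : ∃ t1, T + (τp:ℤ) + (τp:ℤ) ≤ t1 ∧ L ≤ u t1
    · obtain ⟨t1, ht1, hu1⟩ := hex
      filter_upwards [eventually_ge_atTop t1] with t ht
      exact le_trans hz.le (hinv t1 ht1 hu1 t ht)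
    · push_neg at hex
      have hinc : ∀ t, T + (τp:ℤ) + (τp:ℤ) ≤ t → u t ≤ u (t+1) := by
        intro t ht
        by_contra hr
        exact absurd (hfall t ht (not_le.mp hr)) (not_le.mpr (hex (t+1) (by linarith)))
      by_cases hex2 : ∃ t2, T + (τp:ℤ) + (τp:ℤ) ≤ t2 ∧ z ≤ u t2
      · obtain ⟨t2, ht2, hu2⟩ := hex2
        filter_upwards [eventually_ge_atTop t2] with t ht
        refine Int.le_induction (motive := fun t _ => z ≤ u t) hu2 (fun s hs hus => ?_) t ht
        exact le_trans hus (hinc s (le_trans ht2 hs))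
      · push_neg at hex2
        exfalso
        have hzK : z < K := lt_of_lt_of_le hz hLK
        have hc0 : 0 < P - A * Real.exp z := by
          have h2 : Real.exp z < Real.exp K := Real.exp_lt_exp.mpr hzK
          nlinarith
        set c0 := P - A * Real.exp z with hc0def
        set T2 := T + (τp:ℤ) + (τp:ℤ) + (τp:ℤ) with hT2
        have hdrop : ∀ t, T2 ≤ t → u t + c0 ≤ u (t+1) := by
          intro t ht
          obtain ⟨k, hkτ, hk⟩ := heq t (by rw [hT2] at ht; linarith)
          have hkZ : (k:ℤ) ≤ (τp:ℤ) := by exact_mod_cast hkτ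
          have harg : T + (τp:ℤ) + (τp:ℤ) ≤ t - (k:ℤ) := by rw [hT2] at ht; linarith
          have h2 : u (t - (k:ℤ)) < z := hex2 _ harg
          have h3 : A * Real.exp (u (t-(k:ℤ))) ≤ A * Real.exp z :=
            mul_le_mul_of_nonneg_left (Real.exp_le_exp.mpr h2.le) hA.le
          rw [hc0def]; linarith
        have hiter : ∀ N : ℕ, u T2 + (N:ℝ) * c0 ≤ u (T2 + (N:ℤ)) := by
          intro N
          induction N with
          | zero => simp
          | succ N ih =>
            have h1 := hdrop (T2 + (N:ℤ)) (by linarith [Int.ofNat_nonneg N])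
            have harg : T2 + (N:ℤ) + 1 = T2 + ((N+1 : ℕ) : ℤ) := by push_cast; ring
            rw [harg] at h1
            push_cast at ih h1 ⊢
            linarith
        obtain ⟨N, hN⟩ := exists_nat_gt ((z - u T2) / c0)
        have hN2 : z - u T2 < (N:ℝ) * c0 := by
          rw [div_lt_iff₀ hc0] at hN; linarith
        have h4 := hiter N
        have h5 := hex2 (T2 + (N:ℤ)) (by rw [hT2]; linarith [Int.ofNat_nonneg N])
        linarith
  exact Filter.le_liminf_of_le (by isBoundedDefault)
    (hev.mono fun t ht => EReal.coe_le_coe_iff.mpr ht)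

set_option maxHeartbeats 2000000 in
/-- Permanence of the discrete multispecies Lotka–Volterra competition–predation
system with delays (`𝕋 = ℤ`, no impulses), in logarithmic coordinates. -/
theorem lotka_volterra_permanence_int
    (n m : ℕ) (hn : 1 ≤ n) (hm : 1 ≤ m) (t0 : ℤ)
    (b : Fin n → ℤ → ℝ) (a : Fin n → Fin n → ℤ → ℝ) (c : Fin n → Fin m → ℤ → ℝ)
    (r : Fin m → ℤ → ℝ) (d : Fin m → Fin n → ℤ → ℝ) (e : Fin m → Fin m → ℤ → ℝ)
    (τ : Fin n → Fin n → ℤ → ℕ) (δ : Fin n → Fin m → ℤ → ℕ)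
    (ξ : Fin m → Fin n → ℤ → ℕ) (η : Fin m → Fin m → ℤ → ℕ)
    -- nonnegativity of the coefficients
    (hbnn : ∀ i t, 0 ≤ b i t) (hann : ∀ i l t, 0 ≤ a i l t)
    (hcnn : ∀ i h t, 0 ≤ c i h t) (hrnn : ∀ j t, 0 ≤ r j t)
    (hdnn : ∀ j l t, 0 ≤ d j l t) (henn : ∀ j h t, 0 ≤ e j h t)
    -- suprema and infima of the coefficients (in particular boundedness)
    (bU bL : Fin n → ℝ)
    (hbU : ∀ i, IsLUB (Set.range (b i)) (bU i))
    (hbL : ∀ i, IsGLB (Set.range (b i)) (bL i))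
    (aU aL : Fin n → Fin n → ℝ)
    (haU : ∀ i l, IsLUB (Set.range (a i l)) (aU i l))
    (haL : ∀ i l, IsGLB (Set.range (a i l)) (aL i l))
    (cU : Fin n → Fin m → ℝ)
    (hcU : ∀ i h, IsLUB (Set.range (c i h)) (cU i h))
    (rU : Fin m → ℝ)
    (hrU : ∀ j, IsLUB (Set.range (r j)) (rU j))
    (dU dL : Fin m → Fin n → ℝ)
    (hdU : ∀ j l, IsLUB (Set.range (d j l)) (dU j l))
    (hdL : ∀ j l, IsGLB (Set.range (d j l)) (dL j l))
    (eU eL : Fin m → Fin m → ℝ)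
    (heU : ∀ j h, IsLUB (Set.range (e j h)) (eU j h))
    (heL : ∀ j h, IsGLB (Set.range (e j h)) (eL j h))
    -- boundedness of the delays; τ⁺ and η⁺
    (τp : ℕ)
    (hτp : IsLUB (Set.range fun p : (Fin n × Fin n) × ℤ => τ p.1.1 p.1.2 p.2) τp)
    (ηp : ℕ)
    (hηp : IsLUB (Set.range fun p : (Fin m × Fin m) × ℤ => η p.1.1 p.1.2 p.2) ηp)
    (hδbdd : ∀ i h, BddAbove (Set.range (δ i h)))
    (hξbdd : ∀ j l, BddAbove (Set.range (ξ j l)))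
    -- positivity and smallness assumptions
    (hbLpos : ∀ i, 0 < bL i) (haLpos : ∀ i, 0 < aL i i) (heLpos : ∀ j, 0 < eL j j)
    (hbU1 : ∀ i, bU i < 1)
    -- the permanence bounds
    (xV : Fin n → ℝ)
    (hxV : ∀ i, xV i = Real.log (bU i / aL i i) + bU i * (τp : ℝ) / (1 - bU i))
    (D : Fin m → ℝ)
    (hD : ∀ j, D j = ∑ l, dU j l * Real.exp (xV l))
    (hDpos : ∀ j, 0 < D j) (hD1 : ∀ j, D j < 1)
    (yV : Fin m → ℝ)
    (hyV : ∀ j, yV j = Real.log (D j / eL j j) + D j * (ηp : ℝ) / (1 - D j))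
    (P : Fin n → ℝ)
    (hP : ∀ i, P i = bL i
      - (∑ l ∈ Finset.univ.filter (fun l => l ≠ i), aU i l * Real.exp (xV l))
      - ∑ h, cU i h * Real.exp (yV h))
    (hPpos : ∀ i, 0 < P i)
    (hax : ∀ i, 0 < 1 - aU i i * Real.exp (xV i))
    (xW : Fin n → ℝ)
    (hxW : ∀ i, xW i = Real.log (P i / aU i i)
      + (τp : ℝ) * Real.log (1 - aU i i * Real.exp (xV i)))
    (Q : Fin m → ℝ)
    (hQ : ∀ j, Q j = (∑ l, dL j l * Real.exp (xW l)) - rU j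
      - ∑ h ∈ Finset.univ.filter (fun h => h ≠ j), eU j h * Real.exp (yV h))
    (hQpos : ∀ j, 0 < Q j)
    (hey : ∀ j, 0 < 1 - eU j j * Real.exp (yV j))
    (yW : Fin m → ℝ)
    (hyW : ∀ j, yW j = Real.log (Q j / eU j j)
      + (ηp : ℝ) * Real.log (1 - eU j j * Real.exp (yV j)))
    -- a solution of the discrete system on [t0, ∞)
    (x : Fin n → ℤ → ℝ) (y : Fin m → ℤ → ℝ)
    (hxeq : ∀ i t, t0 ≤ t → x i (t + 1) =
      x i t + b i t - (∑ l, a i l t * Real.exp (x l (t - (τ i l t : ℤ))))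
        - ∑ h, c i h t * Real.exp (y h (t - (δ i h t : ℤ))))
    (hyeq : ∀ j t, t0 ≤ t → y j (t + 1) =
      y j t - r j t + (∑ l, d j l t * Real.exp (x l (t - (ξ j l t : ℤ))))
        - ∑ h, e j h t * Real.exp (y h (t - (η j h t : ℤ)))) :
    (∀ i, ((xW i : ℝ) : EReal) ≤ liminf (fun t : ℤ => ((x i t : ℝ) : EReal)) atTop ∧
      liminf (fun t : ℤ => ((x i t : ℝ) : EReal)) atTop ≤
        limsup (fun t : ℤ => ((x i t : ℝ) : EReal)) atTop ∧
      limsup (fun t : ℤ => ((x i t : ℝ) : EReal)) atTop ≤ ((xV i : ℝ) : EReal)) ∧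
    (∀ j, ((yW j : ℝ) : EReal) ≤ liminf (fun t : ℤ => ((y j t : ℝ) : EReal)) atTop ∧
      liminf (fun t : ℤ => ((y j t : ℝ) : EReal)) atTop ≤
        limsup (fun t : ℤ => ((y j t : ℝ) : EReal)) atTop ∧
      limsup (fun t : ℤ => ((y j t : ℝ) : EReal)) atTop ≤ ((yV j : ℝ) : EReal)) := by
    classical
  -- pointwise coefficient bounds
  have hbUge : ∀ i t, b i t ≤ bU i := fun i t => (hbU i).1 ⟨t, rfl⟩
  have hbLle : ∀ i t, bL i ≤ b i t := fun i t => (hbL i).1 ⟨t, rfl⟩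
  have haUge : ∀ i l t, a i l t ≤ aU i l := fun i l t => (haU i l).1 ⟨t, rfl⟩
  have haLle : ∀ i l t, aL i l ≤ a i l t := fun i l t => (haL i l).1 ⟨t, rfl⟩
  have hcUge : ∀ i h t, c i h t ≤ cU i h := fun i h t => (hcU i h).1 ⟨t, rfl⟩
  have hrUge : ∀ j t, r j t ≤ rU j := fun j t => (hrU j).1 ⟨t, rfl⟩
  have hdUge : ∀ j l t, d j l t ≤ dU j l := fun j l t => (hdU j l).1 ⟨t, rfl⟩
  have hdLle : ∀ j l t, dL j l ≤ d j l t := fun j l t => (hdL j l).1 ⟨t, rfl⟩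
  have heUge : ∀ j h t, e j h t ≤ eU j h := fun j h t => (heU j h).1 ⟨t, rfl⟩
  have heLle : ∀ j h t, eL j h ≤ e j h t := fun j h t => (heL j h).1 ⟨t, rfl⟩
  have hbU0 : ∀ i, 0 < bU i := fun i => lt_of_lt_of_le (hbLpos i) ((hbLle i 0).trans (hbUge i 0))
  have haU0 : ∀ i, 0 < aU i i := fun i =>
    lt_of_lt_of_le (haLpos i) ((haLle i i 0).trans (haUge i i 0))
  have heU0 : ∀ j, 0 < eU j j := fun j =>
    lt_of_lt_of_le (heLpos j) ((heLle j j 0).trans (heUge j j 0))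
  have hdU0 : ∀ j l, 0 ≤ dU j l := fun j l => (hdnn j l 0).trans (hdUge j l 0)
  have hcU0 : ∀ i h, 0 ≤ cU i h := fun i h => (hcnn i h 0).trans (hcUge i h 0)
  have hτle : ∀ i l t, τ i l t ≤ τp := fun i l t => hτp.1 ⟨((i,l),t), rfl⟩
  have hηle : ∀ j h t, η j h t ≤ ηp := fun j h t => hηp.1 ⟨((j,h),t), rfl⟩
  choose Δδ hΔδ using hδbdd
  choose Δξ hΔξ using hξbdd
  have hδle : ∀ i h t, δ i h t ≤ Δδ i h := fun i h t => hΔδ i h ⟨t, rfl⟩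
  have hξle : ∀ j l t, ξ j l t ≤ Δξ j l := fun j l t => hΔξ j l ⟨t, rfl⟩
  -- Stage 1 : upper bound for x
  have hxUp : ∀ i, limsup (fun t : ℤ => ((x i t : ℝ) : EReal)) atTop ≤ ((xV i : ℝ) : EReal) := by
    intro i
    rw [hxV i]
    apply core_upper (x i) (bU i) (aL i i) τp t0 (hbU0 i) (hbU1 i) (haLpos i)
    intro t ht
    refine ⟨τ i i t, hτle i i t, ?_⟩
    rw [hxeq i t ht]
    have h1 : b i t ≤ bU i := hbUge i t
    have h2 : aL i i * Real.exp (x i (t - (τ i i t : ℤ))) ≤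
        ∑ l, a i l t * Real.exp (x l (t - (τ i l t : ℤ))) := by
      calc aL i i * Real.exp (x i (t - (τ i i t : ℤ)))
          ≤ a i i t * Real.exp (x i (t - (τ i i t : ℤ))) :=
            mul_le_mul_of_nonneg_right (haLle i i t) (Real.exp_nonneg _)
        _ ≤ ∑ l, a i l t * Real.exp (x l (t - (τ i l t : ℤ))) :=
            Finset.single_le_sum (f := fun l => a i l t * Real.exp (x l (t - (τ i l t : ℤ))))
              (fun l _ => mul_nonneg (hann i l t) (Real.exp_nonneg _)) (Finset.mem_univ i)
    have h3 : 0 ≤ ∑ h, c i h t * Real.exp (y h (t - (δ i h t : ℤ))) :=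
      Finset.sum_nonneg fun h _ => mul_nonneg (hcnn i h t) (Real.exp_nonneg _)
    linarith
  -- Stage 2 : upper bound for y
  have hyUp : ∀ j, limsup (fun t : ℤ => ((y j t : ℝ) : EReal)) atTop ≤ ((yV j : ℝ) : EReal) := by
    intro j
    apply EReal_le_of_forall_real_gt
    intro z hz
    have hcont1 : ContinuousAt (fun s : ℝ => Real.exp s * D j) 0 :=
      (Real.continuous_exp.mul continuous_const).continuousAt
    have hcontF : ContinuousAt (fun s : ℝ => Real.log (Real.exp s * D j / eL j j)
        + Real.exp s * D j * (ηp : ℝ) / (1 - Real.exp s * D j)) 0 := by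
      refine ContinuousAt.add ?_ ?_
      · refine (hcont1.div_const _).log ?_
        simp only [Real.exp_zero, one_mul]
        exact ne_of_gt (div_pos (hDpos j) (heLpos j))
      · refine ContinuousAt.div (hcont1.mul continuousAt_const)
          (continuousAt_const.sub hcont1) ?_
        simp only [Real.exp_zero, one_mul]
        have := hD1 j; intro hcontra; linarith [sub_eq_zero.mp hcontra]
    have hev1 : ∀ᶠ s in nhds (0:ℝ), Real.log (Real.exp s * D j / eL j j)
        + Real.exp s * D j * (ηp : ℝ) / (1 - Real.exp s * D j) < z := by
      refine Tendsto.eventually_lt_const ?_ hcontF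
      simp only [Real.exp_zero, one_mul]
      rw [← hyV j]; exact hz
    have hev2 : ∀ᶠ s in nhds (0:ℝ), Real.exp s * D j < 1 :=
      Tendsto.eventually_lt_const (by simpa using hD1 j) hcont1
    obtain ⟨s, hs0, hFz, hBlt1⟩ := exists_pos_of_eventually_nhds (hev1.and hev2)
    have hxev : ∀ᶠ t' : ℤ in atTop, ∀ l, x l t' ≤ xV l + s := by
      rw [eventually_all]
      exact fun l => ev_le_of_limsup_le (lt_add_of_pos_right _ hs0) (hxUp l)
    obtain ⟨Tx, hTx⟩ := eventually_atTop.mp hxev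
    set Ξ : ℕ := Finset.univ.sup (fun l => Δξ j l) with hΞdef
    set T : ℤ := max t0 (Tx + (Ξ : ℤ)) with hTdef
    have hheq : ∀ t : ℤ, T ≤ t → ∃ k : ℕ, k ≤ ηp ∧ y j (t+1) ≤
        y j t + Real.exp s * D j - eL j j * Real.exp (y j (t - (k : ℤ))) := by
      intro t ht
      refine ⟨η j j t, hηle j j t, ?_⟩
      have ht0 : t0 ≤ t := le_trans (le_max_left _ _) ht
      rw [hyeq j t ht0]
      have hS1 : ∑ l, d j l t * Real.exp (x l (t - (ξ j l t : ℤ))) ≤ Real.exp s * D j := by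
        rw [hD j, Finset.mul_sum]
        refine Finset.sum_le_sum fun l _ => ?_
        have hxl : x l (t - (ξ j l t : ℤ)) ≤ xV l + s := by
          refine hTx _ ?_ l
          have h1 : (ξ j l t : ℤ) ≤ (Ξ : ℤ) := by
            exact_mod_cast (hξle j l t).trans (Finset.le_sup (Finset.mem_univ l))
          have h2 : Tx + (Ξ : ℤ) ≤ t := le_trans (le_max_right _ _) ht
          linarith
        calc d j l t * Real.exp (x l (t - (ξ j l t : ℤ)))
            ≤ dU j l * Real.exp (x l (t - (ξ j l t : ℤ))) :=
              mul_le_mul_of_nonneg_right (hdUge j l t) (Real.exp_nonneg _)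
          _ ≤ dU j l * Real.exp (xV l + s) :=
              mul_le_mul_of_nonneg_left (Real.exp_le_exp.mpr hxl) (hdU0 j l)
          _ = Real.exp s * (dU j l * Real.exp (xV l)) := by rw [Real.exp_add]; ring
      have hS2 : eL j j * Real.exp (y j (t - (η j j t : ℤ))) ≤
          ∑ h, e j h t * Real.exp (y h (t - (η j h t : ℤ))) := by
        calc eL j j * Real.exp (y j (t - (η j j t : ℤ)))
            ≤ e j j t * Real.exp (y j (t - (η j j t : ℤ))) :=
              mul_le_mul_of_nonneg_right (heLle j j t) (Real.exp_nonneg _)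
          _ ≤ ∑ h, e j h t * Real.exp (y h (t - (η j h t : ℤ))) :=
              Finset.single_le_sum (f := fun h => e j h t * Real.exp (y h (t - (η j h t : ℤ))))
                (fun h _ => mul_nonneg (henn j h t) (Real.exp_nonneg _)) (Finset.mem_univ j)
      have h4 : 0 ≤ r j t := hrnn j t
      linarith
    have hlim := core_upper (y j) (Real.exp s * D j) (eL j j) ηp T
      (mul_pos (Real.exp_pos s) (hDpos j)) hBlt1 (heLpos j) hheq
    exact le_trans hlim (EReal.coe_le_coe_iff.mpr hFz.le)
  -- Stage 3 : lower bound for x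
  have hxLo : ∀ i, ((xW i : ℝ) : EReal) ≤ liminf (fun t : ℤ => ((x i t : ℝ) : EReal)) atTop := by
    intro i
    apply EReal_ge_of_forall_real_lt
    intro z hz
    have hP' : P i = bL i - (∑ l ∈ Finset.univ.erase i, aU i l * Real.exp (xV l))
        - ∑ h, cU i h * Real.exp (yV h) := by
      rw [hP i, Finset.filter_ne']
    set Pf : ℝ → ℝ := fun s => bL i - (∑ l ∈ Finset.univ.erase i, aU i l * Real.exp (xV l + s))
      - ∑ h, cU i h * Real.exp (yV h + s) with hPfdef
    have hPf0 : Pf 0 = P i := by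
      rw [hPfdef]; simp only [add_zero]; rw [hP']
    have hcontP : ContinuousAt Pf 0 := by
      rw [hPfdef]
      refine ContinuousAt.sub (ContinuousAt.sub continuousAt_const ?_) ?_
      · exact (continuous_finset_sum _ fun l _ => continuous_const.mul
          (Real.continuous_exp.comp (continuous_const.add continuous_id))).continuousAt
      · exact (continuous_finset_sum _ fun h _ => continuous_const.mul
          (Real.continuous_exp.comp (continuous_const.add continuous_id))).continuousAt
    have hcontA : ContinuousAt (fun s : ℝ => aU i i * Real.exp (xV i + s)) 0 :=
      (continuous_const.mul (Real.continuous_exp.comp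
        (continuous_const.add continuous_id))).continuousAt
    have hcontG : ContinuousAt (fun s : ℝ => Real.log (Pf s / aU i i)
        + (τp : ℝ) * Real.log (1 - aU i i * Real.exp (xV i + s))) 0 := by
      refine ContinuousAt.add ?_ (continuousAt_const.mul ?_)
      · refine (hcontP.div_const _).log ?_
        rw [hPf0]
        exact ne_of_gt (div_pos (hPpos i) (haU0 i))
      · refine (continuousAt_const.sub hcontA).log ?_
        simpa using ne_of_gt (hax i)
    have hevz : ∀ᶠ s in nhds (0:ℝ), z < Real.log (Pf s / aU i i)
        + (τp : ℝ) * Real.log (1 - aU i i * Real.exp (xV i + s)) := by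
      refine Tendsto.eventually_const_lt ?_ hcontG
      simp only [hPf0, add_zero]
      rw [← hxW i]; exact hz
    have hevP : ∀ᶠ s in nhds (0:ℝ), 0 < Pf s :=
      Tendsto.eventually_const_lt (by rw [hPf0]; exact hPpos i) hcontP
    have hevA : ∀ᶠ s in nhds (0:ℝ), aU i i * Real.exp (xV i + s) < 1 := by
      refine Tendsto.eventually_lt_const ?_ hcontA
      have := hax i
      simp only [add_zero]
      linarith
    obtain ⟨s, hs0, ⟨hGz, hPs⟩, hAs⟩ :=
      exists_pos_of_eventually_nhds ((hevz.and hevP).and hevA)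
    have hxev : ∀ᶠ t' : ℤ in atTop, ∀ l, x l t' ≤ xV l + s := by
      rw [eventually_all]
      exact fun l => ev_le_of_limsup_le (lt_add_of_pos_right _ hs0) (hxUp l)
    have hyev : ∀ᶠ t' : ℤ in atTop, ∀ h, y h t' ≤ yV h + s := by
      rw [eventually_all]
      exact fun h => ev_le_of_limsup_le (lt_add_of_pos_right _ hs0) (hyUp h)
    obtain ⟨T0, hT0⟩ := eventually_atTop.mp (hxev.and hyev)
    set Δ : ℕ := max τp (Finset.univ.sup (fun h => Δδ i h)) with hΔdef
    set T : ℤ := max t0 (T0 + (Δ : ℤ)) with hTdef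
    have hT0T : T0 ≤ T := by
      have h1 : (0:ℤ) ≤ (Δ : ℤ) := Int.ofNat_nonneg Δ
      have := le_max_right t0 (T0 + (Δ : ℤ))
      linarith
    have hub : ∀ t : ℤ, T ≤ t → x i t ≤ xV i + s :=
      fun t ht => (hT0 t (le_trans hT0T ht)).1 i
    have hheq : ∀ t : ℤ, T ≤ t → ∃ k : ℕ, k ≤ τp ∧
        x i t + Pf s - aU i i * Real.exp (x i (t - (k : ℤ))) ≤ x i (t+1) := by
      intro t ht
      refine ⟨τ i i t, hτle i i t, ?_⟩
      have ht0 : t0 ≤ t := le_trans (le_max_left _ _) ht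
      have htT0 : T0 + (Δ : ℤ) ≤ t := le_trans (le_max_right _ _) ht
      rw [hxeq i t ht0]
      have hbound : ∀ (w : ℤ), w ≤ (Δ:ℤ) → 0 ≤ w → (∀ l, x l (t - w) ≤ xV l + s) ∧
          (∀ h, y h (t - w) ≤ yV h + s) := by
        intro w hw hw0
        exact hT0 (t - w) (by linarith)
      have hS1 : ∑ l, a i l t * Real.exp (x l (t - (τ i l t : ℤ))) ≤
          (∑ l ∈ Finset.univ.erase i, aU i l * Real.exp (xV l + s))
            + aU i i * Real.exp (x i (t - (τ i i t : ℤ))) := by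
        rw [← Finset.sum_erase_add Finset.univ
          (fun l => a i l t * Real.exp (x l (t - (τ i l t : ℤ)))) (Finset.mem_univ i)]
        refine add_le_add (Finset.sum_le_sum fun l _ => ?_)
          (mul_le_mul_of_nonneg_right (haUge i i t) (Real.exp_nonneg _))
        have hxl : x l (t - (τ i l t : ℤ)) ≤ xV l + s := by
          refine (hbound (τ i l t) ?_ (Int.ofNat_nonneg _)).1 l
          exact_mod_cast (hτle i l t).trans (le_max_left _ _)
        calc a i l t * Real.exp (x l (t - (τ i l t : ℤ)))
            ≤ aU i l * Real.exp (x l (t - (τ i l t : ℤ))) :=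
              mul_le_mul_of_nonneg_right (haUge i l t) (Real.exp_nonneg _)
          _ ≤ aU i l * Real.exp (xV l + s) :=
              mul_le_mul_of_nonneg_left (Real.exp_le_exp.mpr hxl)
                ((hann i l 0).trans (haUge i l 0))
      have hS2 : ∑ h, c i h t * Real.exp (y h (t - (δ i h t : ℤ))) ≤
          ∑ h, cU i h * Real.exp (yV h + s) := by
        refine Finset.sum_le_sum fun h _ => ?_
        have hyh : y h (t - (δ i h t : ℤ)) ≤ yV h + s := by
          refine (hbound (δ i h t) ?_ (Int.ofNat_nonneg _)).2 h
          have : δ i h t ≤ Δ := (hδle i h t).trans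
            ((Finset.le_sup (Finset.mem_univ h)).trans (le_max_right _ _))
          exact_mod_cast this
        calc c i h t * Real.exp (y h (t - (δ i h t : ℤ)))
            ≤ cU i h * Real.exp (y h (t - (δ i h t : ℤ))) :=
              mul_le_mul_of_nonneg_right (hcUge i h t) (Real.exp_nonneg _)
          _ ≤ cU i h * Real.exp (yV h + s) :=
              mul_le_mul_of_nonneg_left (Real.exp_le_exp.mpr hyh) (hcU0 i h)
      have hb : bL i ≤ b i t := hbLle i t
      rw [hPfdef]
      simp only
      linarith
    have hlim := core_lower (x i) (Pf s) (aU i i) (xV i + s) τp T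
      hPs (haU0 i) hAs hub hheq
    refine le_trans ?_ hlim
    exact EReal.coe_le_coe_iff.mpr hGz.le
  -- Stage 4 : lower bound for y
  have hdL0 : ∀ j l, 0 ≤ dL j l := fun j l => (hdL j l).2 fun v hv => by
    obtain ⟨t, rfl⟩ := hv; exact hdnn j l t
  have hyLo : ∀ j, ((yW j : ℝ) : EReal) ≤ liminf (fun t : ℤ => ((y j t : ℝ) : EReal)) atTop := by
    intro j
    apply EReal_ge_of_forall_real_lt
    intro z hz
    have hQ' : Q j = (∑ l, dL j l * Real.exp (xW l)) - rU j
        - ∑ h ∈ Finset.univ.erase j, eU j h * Real.exp (yV h) := by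
      rw [hQ j, Finset.filter_ne']
    set Pf : ℝ → ℝ := fun s => (∑ l, dL j l * Real.exp (xW l - s)) - rU j
      - ∑ h ∈ Finset.univ.erase j, eU j h * Real.exp (yV h + s) with hPfdef
    have hPf0 : Pf 0 = Q j := by
      rw [hPfdef]; simp only [sub_zero, add_zero]; rw [hQ']
    have hcontP : ContinuousAt Pf 0 := by
      rw [hPfdef]
      refine ContinuousAt.sub (ContinuousAt.sub ?_ continuousAt_const) ?_
      · exact (continuous_finset_sum _ fun l _ => continuous_const.mul
          (Real.continuous_exp.comp (continuous_const.sub continuous_id))).continuousAt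
      · exact (continuous_finset_sum _ fun h _ => continuous_const.mul
          (Real.continuous_exp.comp (continuous_const.add continuous_id))).continuousAt
    have hcontA : ContinuousAt (fun s : ℝ => eU j j * Real.exp (yV j + s)) 0 :=
      (continuous_const.mul (Real.continuous_exp.comp
        (continuous_const.add continuous_id))).continuousAt
    have hcontG : ContinuousAt (fun s : ℝ => Real.log (Pf s / eU j j)
        + (ηp : ℝ) * Real.log (1 - eU j j * Real.exp (yV j + s))) 0 := by
      refine ContinuousAt.add ?_ (continuousAt_const.mul ?_)
      · refine (hcontP.div_const _).log ?_
        rw [hPf0]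
        exact ne_of_gt (div_pos (hQpos j) (heU0 j))
      · refine (continuousAt_const.sub hcontA).log ?_
        simpa using ne_of_gt (hey j)
    have hevz : ∀ᶠ s in nhds (0:ℝ), z < Real.log (Pf s / eU j j)
        + (ηp : ℝ) * Real.log (1 - eU j j * Real.exp (yV j + s)) := by
      refine Tendsto.eventually_const_lt ?_ hcontG
      simp only [hPf0, add_zero]
      rw [← hyW j]; exact hz
    have hevP : ∀ᶠ s in nhds (0:ℝ), 0 < Pf s :=
      Tendsto.eventually_const_lt (by rw [hPf0]; exact hQpos j) hcontP
    have hevA : ∀ᶠ s in nhds (0:ℝ), eU j j * Real.exp (yV j + s) < 1 := by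
      refine Tendsto.eventually_lt_const ?_ hcontA
      have := hey j
      simp only [add_zero]
      linarith
    obtain ⟨s, hs0, ⟨hGz, hPs⟩, hAs⟩ :=
      exists_pos_of_eventually_nhds ((hevz.and hevP).and hevA)
    have hxev : ∀ᶠ t' : ℤ in atTop, ∀ l, xW l - s ≤ x l t' := by
      rw [eventually_all]
      exact fun l => ev_ge_of_le_liminf (sub_lt_self _ hs0) (hxLo l)
    have hyev : ∀ᶠ t' : ℤ in atTop, ∀ h, y h t' ≤ yV h + s := by
      rw [eventually_all]
      exact fun h => ev_le_of_limsup_le (lt_add_of_pos_right _ hs0) (hyUp h)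
    obtain ⟨T0, hT0⟩ := eventually_atTop.mp (hxev.and hyev)
    set Δ : ℕ := max ηp (Finset.univ.sup (fun l => Δξ j l)) with hΔdef
    set T : ℤ := max t0 (T0 + (Δ : ℤ)) with hTdef
    have hT0T : T0 ≤ T := by
      have h1 : (0:ℤ) ≤ (Δ : ℤ) := Int.ofNat_nonneg Δ
      have := le_max_right t0 (T0 + (Δ : ℤ))
      linarith
    have hub : ∀ t : ℤ, T ≤ t → y j t ≤ yV j + s :=
      fun t ht => (hT0 t (le_trans hT0T ht)).2 j
    have hheq : ∀ t : ℤ, T ≤ t → ∃ k : ℕ, k ≤ ηp ∧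
        y j t + Pf s - eU j j * Real.exp (y j (t - (k : ℤ))) ≤ y j (t+1) := by
      intro t ht
      refine ⟨η j j t, hηle j j t, ?_⟩
      have ht0 : t0 ≤ t := le_trans (le_max_left _ _) ht
      have htT0 : T0 + (Δ : ℤ) ≤ t := le_trans (le_max_right _ _) ht
      rw [hyeq j t ht0]
      have hbound : ∀ (w : ℤ), w ≤ (Δ:ℤ) → 0 ≤ w → (∀ l, xW l - s ≤ x l (t - w)) ∧
          (∀ h, y h (t - w) ≤ yV h + s) := by
        intro w hw hw0
        exact hT0 (t - w) (by linarith)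
      have hS1 : ∑ l, dL j l * Real.exp (xW l - s) ≤
          ∑ l, d j l t * Real.exp (x l (t - (ξ j l t : ℤ))) := by
        refine Finset.sum_le_sum fun l _ => ?_
        have hxl : xW l - s ≤ x l (t - (ξ j l t : ℤ)) := by
          refine (hbound (ξ j l t) ?_ (Int.ofNat_nonneg _)).1 l
          have : ξ j l t ≤ Δ := (hξle j l t).trans
            ((Finset.le_sup (Finset.mem_univ l)).trans (le_max_right _ _))
          exact_mod_cast this
        calc dL j l * Real.exp (xW l - s)
            ≤ dL j l * Real.exp (x l (t - (ξ j l t : ℤ))) :=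
              mul_le_mul_of_nonneg_left (Real.exp_le_exp.mpr hxl) (hdL0 j l)
          _ ≤ d j l t * Real.exp (x l (t - (ξ j l t : ℤ))) :=
              mul_le_mul_of_nonneg_right (hdLle j l t) (Real.exp_nonneg _)
      have hS2 : ∑ h, e j h t * Real.exp (y h (t - (η j h t : ℤ))) ≤
          (∑ h ∈ Finset.univ.erase j, eU j h * Real.exp (yV h + s))
            + eU j j * Real.exp (y j (t - (η j j t : ℤ))) := by
        rw [← Finset.sum_erase_add Finset.univ
          (fun h => e j h t * Real.exp (y h (t - (η j h t : ℤ)))) (Finset.mem_univ j)]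
        refine add_le_add (Finset.sum_le_sum fun h _ => ?_)
          (mul_le_mul_of_nonneg_right (heUge j j t) (Real.exp_nonneg _))
        have hyh : y h (t - (η j h t : ℤ)) ≤ yV h + s := by
          refine (hbound (η j h t) ?_ (Int.ofNat_nonneg _)).2 h
          exact_mod_cast (hηle j h t).trans (le_max_left _ _)
        calc e j h t * Real.exp (y h (t - (η j h t : ℤ)))
            ≤ eU j h * Real.exp (y h (t - (η j h t : ℤ))) :=
              mul_le_mul_of_nonneg_right (heUge j h t) (Real.exp_nonneg _)
          _ ≤ eU j h * Real.exp (yV h + s) :=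
              mul_le_mul_of_nonneg_left (Real.exp_le_exp.mpr hyh)
                ((henn j h 0).trans (heUge j h 0))
      have hr : r j t ≤ rU j := hrUge j t
      rw [hPfdef]
      simp only
      linarith
    have hlim := core_lower (y j) (Pf s) (eU j j) (yV j + s) ηp T
      hPs (heU0 j) hAs hub hheq
    refine le_trans ?_ hlim
    exact EReal.coe_le_coe_iff.mpr hGz.le
  exact ⟨fun i => ⟨hxLo i, Filter.liminf_le_limsup, hxUp i⟩,
    fun j => ⟨hyLo j, Filter.liminf_le_limsup, hyUp j⟩⟩
end
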